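/- arXiv:2208.01560 — 4 statements merged into one kernel-verified Lean document; each statement's English description precedes it below -/
import Mathlib

section
/- A tuple Φ = (φ₁,…,φ_m) of pairwise commuting maps X → X is a triangular system for (X, cl) if and only if for each i ∈ {1,…,m} and all finite A ⊆ X and all B ⊆ X: rk(φᵢ(A) | φ₁(A∪B) ∪ ⋯ ∪ φ_{i−1}(A∪B) ∪ φᵢ(B)) ≤ rk(A|B). -/
open Set

/-- A finitary matroid (pregeometry): a closure operator satisfying monotonicity,
idempotence, finite character and Steinitz exchange. -/
structure FinMatroid (X : Type*) where
  cl : Set X → Set X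
  subset_cl : ∀ A : Set X, A ⊆ cl A
  cl_mono : ∀ ⦃A B : Set X⦄, A ⊆ B → cl A ⊆ cl B
  cl_idem : ∀ A : Set X, cl (cl A) = cl A
  cl_finChar : ∀ (A : Set X) (a : X), a ∈ cl A → ∃ A₀ ⊆ A, A₀.Finite ∧ a ∈ cl A₀
  cl_exchange : ∀ (a b : X) (A : Set X), a ∈ cl (A ∪ {b}) → a ∉ cl A → b ∈ cl (A ∪ {a})

namespace FinMatroid

variable {X : Type*}

/-- `B` is `cl`-independent over `A`. -/
def Indep (M : FinMatroid X) (A B : Set X) : Prop :=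
  ∀ b ∈ B, b ∉ M.cl (A ∪ (B \ {b}))

/-- `B₀` is a basis for `B` over `A`. -/
def IsBasisOver (M : FinMatroid X) (A B B₀ : Set X) : Prop :=
  B₀ ⊆ B ∧ M.Indep A B₀ ∧ B ⊆ M.cl (A ∪ B₀)

/-- The rank `rk(B|A)`: the common cardinality of bases of `B` over `A`. -/
noncomputable def rk (M : FinMatroid X) (B A : Set X) : ℕ :=
  sInf {n : ℕ | ∃ B₀ : Set X, M.IsBasisOver A B B₀ ∧ B₀.ncard = n}

end FinMatroid

/-- `ψ` is a triangular system for the finitary matroid `M`. -/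
def Triangular {X : Type*} (M : FinMatroid X) {n : ℕ} (ψ : Fin n → X → X) : Prop :=
  ∀ (i : Fin n) (a : X) (B : Set X), a ∈ M.cl B →
    ψ i a ∈ M.cl (⋃ j ∈ Finset.Iic i, (ψ j) '' B)

/-- `ψ` is quasi-triangular: the system augmented by the identity map is triangular. -/
def QuasiTriangular {X : Type*} (M : FinMatroid X) {n : ℕ} (ψ : Fin n → X → X) : Prop :=
  Triangular M (Fin.cons id ψ)

/-- The composite operator `φ^r̄ = φ₁^{r₁} ∘ ⋯ ∘ φ_m^{r_m}` (operators indexed by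
pairs `(i, j)` with `i : Fin k`, `j : Fin (d i)`). -/
def opPow {X : Type*} {k : ℕ} {d : Fin k → ℕ} (φ : ∀ i : Fin k, Fin (d i) → X → X)
    (r : ∀ i : Fin k, Fin (d i) → ℕ) : X → X :=
  (List.finRange k).foldr
    (fun i f => ((List.finRange (d i)).foldr (fun j g => (φ i j)^[r i j] ∘ g) id) ∘ f) id

/-- The operators pairwise commute. -/
def Commuting {X : Type*} {k : ℕ} {d : Fin k → ℕ}
    (φ : ∀ i : Fin k, Fin (d i) → X → X) : Prop :=
  ∀ i j i' j', Function.Commute (φ i j) (φ i' j')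

/-- `Φ^{(s̄)}(A)`: images of elements of `A` under all `φ^r̄` with `‖r̄‖ = s̄`. -/
def PhiEq {X : Type*} {k : ℕ} {d : Fin k → ℕ} (φ : ∀ i : Fin k, Fin (d i) → X → X)
    (s : Fin k → ℕ) (A : Set X) : Set X :=
  {x | ∃ r : ∀ i : Fin k, Fin (d i) → ℕ,
    (∀ i, ∑ j, r i j = s i) ∧ ∃ a ∈ A, x = opPow φ r a}

/-- `Φ^{≼(s̄)}(A)`: images of elements of `A` under all `φ^r̄` with `‖r̄‖ ≼ s̄`. -/
def PhiLe {X : Type*} {k : ℕ} {d : Fin k → ℕ} (φ : ∀ i : Fin k, Fin (d i) → X → X)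
    (s : Fin k → ℕ) (A : Set X) : Set X :=
  {x | ∃ r : ∀ i : Fin k, Fin (d i) → ℕ,
    (∀ i, ∑ j, r i j ≤ s i) ∧ ∃ a ∈ A, x = opPow φ r a}

/-- `|Φ^{(s̄)}|`: the number of `r̄ ∈ ℕ^m` with `‖r̄‖ = s̄`. -/
noncomputable def cntEq {k : ℕ} (d : Fin k → ℕ) (s : Fin k → ℕ) : ℕ :=
  Nat.card {r : ∀ i : Fin k, Fin (d i) → ℕ // ∀ i, ∑ j, r i j = s i}

/-- `|Φ^{≼(s̄)}|`: the number of `r̄ ∈ ℕ^m` with `‖r̄‖ ≼ s̄`. -/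
noncomputable def cntLe {k : ℕ} (d : Fin k → ℕ) (s : Fin k → ℕ) : ℕ :=
  Nat.card {r : ∀ i : Fin k, Fin (d i) → ℕ // ∀ i, ∑ j, r i j ≤ s i}

/-- `Θ(A)`: images of elements of `A` under all the operators `φ^r̄`, `r̄ ∈ ℕ^m`. -/
def Theta {X : Type*} {k : ℕ} {d : Fin k → ℕ} (φ : ∀ i : Fin k, Fin (d i) → X → X)
    (A : Set X) : Set X :=
  {x | ∃ r : ∀ i : Fin k, Fin (d i) → ℕ, ∃ a ∈ A, x = opPow φ r a}

/-- The `Φ`-closure operator. -/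
noncomputable def clPhi {X : Type*} {k : ℕ} {d : Fin k → ℕ} (M : FinMatroid X)
    (φ : ∀ i : Fin k, Fin (d i) → X → X) (B : Set X) : Set X :=
  {a | ∃ s : Fin k → ℕ, M.rk (PhiEq φ s {a}) (PhiEq φ s B) < cntEq d s}

/-- The `Φ*`-closure operator. -/
noncomputable def clPhiStar {X : Type*} {k : ℕ} {d : Fin k → ℕ} (M : FinMatroid X)
    (φ : ∀ i : Fin k, Fin (d i) → X → X) (B : Set X) : Set X :=
  {a | ∃ s : Fin k → ℕ, M.rk (PhiLe φ s {a}) (PhiLe φ s B) < cntLe d s}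

/-- View a function `Fin k → ℕ` as a monomial exponent. -/
noncomputable def expOf {k : ℕ} (e : Fin k → ℕ) : Fin k →₀ ℕ :=
  Finsupp.equivFunOnFinite.symm e

namespace FinMatroid

variable {X : Type*}

lemma shrink_aux (M : FinMatroid X) (C T : Set X) :
    ∀ n (S : Set X), S.ncard = n → S.Finite → S ⊆ T → T ⊆ M.cl (C ∪ S) →
      ∃ S₀, S₀ ⊆ S ∧ M.IsBasisOver C T S₀ := by
  intro n
  induction n using Nat.strong_induction_on with
  | _ n ih =>
    intro S hn hS hST hspan
    by_cases hind : M.Indep C S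
    · exact ⟨S, subset_rfl, hST, hind, hspan⟩
    · simp only [Indep, not_forall] at hind
      obtain ⟨b, hbS, hb⟩ := hind
      rw [not_not] at hb
      have hS' : (S \ {b}).Finite := hS.diff
      have hcard : (S \ {b}).ncard < n := by
        rw [← hn]
        exact Set.ncard_diff_singleton_lt_of_mem hbS hS
      have hsub : C ∪ S ⊆ M.cl (C ∪ (S \ {b})) := by
        intro x hx
        rcases hx with hx | hx
        · exact M.subset_cl _ (Or.inl hx)
        · by_cases hxb : x = b
          · subst hxb; exact hb
          · exact M.subset_cl _ (Or.inr ⟨hx, hxb⟩)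
      have hspan' : T ⊆ M.cl (C ∪ (S \ {b})) := by
        refine hspan.trans ?_
        have h2 := M.cl_mono hsub
        rwa [M.cl_idem] at h2
      obtain ⟨S₀, hS₀, hbasis⟩ :=
        ih _ hcard (S \ {b}) rfl hS' ((Set.diff_subset).trans hST) hspan'
      exact ⟨S₀, hS₀.trans Set.diff_subset, hbasis⟩

lemma exists_basis_of_finite (M : FinMatroid X) (C T : Set X) (hT : T.Finite) :
    ∃ T₀, M.IsBasisOver C T T₀ := by
  obtain ⟨T₀, _, h⟩ := M.shrink_aux C T T.ncard T rfl hT subset_rfl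
    ((Set.subset_union_right).trans (M.subset_cl _))
  exact ⟨T₀, h⟩

lemma rk_le_of_basis (M : FinMatroid X) {A B B₀ : Set X} (h : M.IsBasisOver A B B₀) :
    M.rk B A ≤ B₀.ncard :=
  Nat.sInf_le ⟨B₀, h, rfl⟩

lemma exists_basis_card_rk (M : FinMatroid X) {A B : Set X} (hB : B.Finite) :
    ∃ B₀, M.IsBasisOver A B B₀ ∧ B₀.ncard = M.rk B A := by
  obtain ⟨B₀, h⟩ := M.exists_basis_of_finite A B hB
  have hne : {n : ℕ | ∃ B₀, M.IsBasisOver A B B₀ ∧ B₀.ncard = n}.Nonempty :=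
    ⟨B₀.ncard, B₀, h, rfl⟩
  have hm : M.rk B A ∈ {n : ℕ | ∃ B₀, M.IsBasisOver A B B₀ ∧ B₀.ncard = n} :=
    Nat.sInf_mem hne
  exact hm

end FinMatroid

/-- **Lemma 1.1.** A tuple `Φ = (φ₁,…,φ_m)` of pairwise commuting maps is a triangular
system if and only if for each `i` and all finite `A ⊆ X` and all `B ⊆ X` one has
`rk(φᵢ(A) | φ₁(A∪B) ∪ ⋯ ∪ φ_{i-1}(A∪B) ∪ φᵢ(B)) ≤ rk(A|B)`. -/
theorem statement5 {X : Type*} (M : FinMatroid X) {m : ℕ} (φ : Fin m → X → X)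
    (hcomm : ∀ i j, Function.Commute (φ i) (φ j)) :
    Triangular M φ ↔
      ∀ (i : Fin m) (A B : Set X), A.Finite →
        M.rk ((φ i) '' A)
          ((⋃ j ∈ Finset.Iio i, (φ j) '' (A ∪ B)) ∪ (φ i) '' B) ≤ M.rk A B := by
  constructor
  · intro htri i A B hA
    obtain ⟨A₀, hA₀, hcard⟩ := M.exists_basis_card_rk (A := B) hA
    have hA₀fin : A₀.Finite := hA.subset hA₀.1
    have hspan : (φ i) '' A ⊆
        M.cl (((⋃ j ∈ Finset.Iio i, (φ j) '' (A ∪ B)) ∪ (φ i) '' B) ∪ (φ i) '' A₀) := by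
      rintro x ⟨a, ha, rfl⟩
      have h1 : a ∈ M.cl (B ∪ A₀) := hA₀.2.2 ha
      have h2 := htri i a (B ∪ A₀) h1
      refine M.cl_mono ?_ h2
      intro y hy
      simp only [Set.mem_iUnion, Set.mem_image] at hy
      obtain ⟨j, hj, z, hz, rfl⟩ := hy
      rw [Finset.mem_Iic] at hj
      rcases lt_or_eq_of_le hj with hlt | heq
      · refine Or.inl (Or.inl ?_)
        simp only [Set.mem_iUnion, Set.mem_image]
        refine ⟨j, Finset.mem_Iio.mpr hlt, z, ?_, rfl⟩
        rcases hz with hz | hz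
        · exact Or.inr hz
        · exact Or.inl (hA₀.1 hz)
      · subst heq
        rcases hz with hz | hz
        · exact Or.inl (Or.inr ⟨z, hz, rfl⟩)
        · exact Or.inr ⟨z, hz, rfl⟩
    obtain ⟨S₀, hS₀sub, hbasis⟩ := M.shrink_aux _ ((φ i) '' A) _ ((φ i) '' A₀) rfl
      (hA₀fin.image _) (Set.image_mono hA₀.1) hspan
    calc M.rk ((φ i) '' A) ((⋃ j ∈ Finset.Iio i, (φ j) '' (A ∪ B)) ∪ (φ i) '' B)
        ≤ S₀.ncard := M.rk_le_of_basis hbasis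
      _ ≤ ((φ i) '' A₀).ncard := Set.ncard_le_ncard hS₀sub (hA₀fin.image _)
      _ ≤ A₀.ncard := Set.ncard_image_le hA₀fin
      _ = M.rk A B := hcard
  · intro hrk
    have key : ∀ N : ℕ, ∀ i : Fin m, (i : ℕ) = N → ∀ (a : X) (B : Set X), a ∈ M.cl B →
        φ i a ∈ M.cl (⋃ j ∈ Finset.Iic i, (φ j) '' B) := by
      intro N
      induction N using Nat.strong_induction_on with
      | _ N ih =>
        rintro i rfl a B haB
        have hCsub : (⋃ j ∈ Finset.Iio i, (φ j) '' ({a} ∪ B)) ∪ (φ i) '' B ⊆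
            M.cl (⋃ j ∈ Finset.Iic i, (φ j) '' B) := by
          rintro x (hx | hx)
          · simp only [Set.mem_iUnion, Set.mem_image] at hx
            obtain ⟨j, hj, z, hz, rfl⟩ := hx
            rw [Finset.mem_Iio] at hj
            rcases hz with hz | hz
            · rw [Set.mem_singleton_iff] at hz; subst hz
              have hja := ih j.val (by exact_mod_cast hj) j rfl z B haB
              refine M.cl_mono ?_ hja
              refine Set.iUnion₂_mono' (fun j' hj' => ⟨j', ?_, subset_rfl⟩)
              rw [Finset.mem_Iic] at hj' ⊢
              exact hj'.trans hj.le
            · refine M.subset_cl _ ?_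
              simp only [Set.mem_iUnion, Set.mem_image]
              exact ⟨j, Finset.mem_Iic.mpr hj.le, z, hz, rfl⟩
          · refine M.subset_cl _ ?_
            simp only [Set.mem_iUnion]
            exact ⟨i, Finset.mem_Iic.mpr le_rfl, hx⟩
        have h0 : M.rk {a} B = 0 := by
          have hb : M.IsBasisOver B {a} ∅ :=
            ⟨Set.empty_subset _, fun b hb => absurd hb (Set.notMem_empty b), by
              rw [Set.union_empty]; exact Set.singleton_subset_iff.mpr haB⟩
          have h3 := M.rk_le_of_basis hb
          simpa using h3
        have hle := hrk i {a} B (Set.finite_singleton a)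
        rw [h0, Nat.le_zero] at hle
        obtain ⟨B₀, hB₀, hB₀card⟩ := M.exists_basis_card_rk
          (A := (⋃ j ∈ Finset.Iio i, (φ j) '' ({a} ∪ B)) ∪ (φ i) '' B)
          (B := (φ i) '' {a}) ((Set.finite_singleton a).image _)
        rw [hle] at hB₀card
        have hB₀fin : B₀.Finite := ((Set.finite_singleton a).image _).subset hB₀.1
        have hB₀e : B₀ = ∅ := (Set.ncard_eq_zero hB₀fin).mp hB₀card
        subst hB₀e
        have hmem : φ i a ∈
            M.cl ((⋃ j ∈ Finset.Iio i, (φ j) '' ({a} ∪ B)) ∪ (φ i) '' B) := by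
          have h4 := hB₀.2.2 (Set.mem_image_of_mem _ (Set.mem_singleton a))
          rwa [Set.union_empty] at h4
        have hfin := M.cl_mono hCsub
        rw [M.cl_idem] at hfin
        exact hfin hmem
    exact fun i a B h => key i.val i rfl a B h
end

section
/- Let d₁,…,d_k ≥ 1 and let f : ℕ^k → ℕ. Suppose that (1−Y₁)^{d₁}⋯(1−Y_k)^{d_k} · G_f(Ȳ) = R(Ȳ) in ℚ[[Y₁,…,Y_k]] for some polynomial R ∈ ℚ[Y₁,…,Y_k] of degree at most m̄ = (m₁,…,m_k). Then there is a polynomial P ∈ ℚ[Y₁,…,Y_k] of degree at most (d₁−1,…,d_k−1) such that f(s̄) = P(s̄) for all s̄ ∈ ℕ^k with s̄ ≽ m̄, and the coefficient of Y₁^{d₁−1}⋯Y_k^{d_k−1} in P equals R(1,…,1) / ((d₁−1)!⋯(d_k−1)!). -/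
/-- The generating function `G_f(Ȳ) = Σ_{s̄} f(s̄) Ȳ^{s̄}` of `f : ℕ^k → ℕ`,
as a multivariate formal power series with rational coefficients. -/
noncomputable def genFun {k : ℕ} (f : (Fin k → ℕ) → ℕ) : MvPowerSeries (Fin k) ℚ :=
  fun e => (f (fun i => e i) : ℚ)

open Finset

noncomputable def emb {k : ℕ} (i : Fin k) (φ : PowerSeries ℚ) : MvPowerSeries (Fin k) ℚ :=
  fun e => if e = Finsupp.single i (e i) then PowerSeries.coeff (e i) φ else 0

lemma emb_coeff {k : ℕ} (i : Fin k) (φ : PowerSeries ℚ) (e : Fin k →₀ ℕ) :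
    MvPowerSeries.coeff e (emb i φ)
      = if e = Finsupp.single i (e i) then PowerSeries.coeff (e i) φ else 0 := rfl

lemma emb_coeff_single {k : ℕ} (i : Fin k) (φ : PowerSeries ℚ) (m : ℕ) :
    MvPowerSeries.coeff (Finsupp.single i m) (emb i φ) = PowerSeries.coeff m φ := by
  rw [emb_coeff]
  simp

lemma emb_mul {k : ℕ} (i : Fin k) (φ ψ : PowerSeries ℚ) :
    emb i (φ * ψ) = emb i φ * emb i ψ := by
  ext e
  rw [MvPowerSeries.coeff_mul, emb_coeff]
  split_ifs with h
  · obtain ⟨m, rfl⟩ : ∃ m, e = Finsupp.single i m := ⟨e i, h⟩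
    rw [Finsupp.antidiagonal_single, Finset.sum_map, PowerSeries.coeff_mul,
      Finsupp.single_eq_same]
    apply Finset.sum_congr rfl
    intro p hp
    simp [emb_coeff_single]
  · symm
    apply Finset.sum_eq_zero
    intro p hp
    rw [Finset.HasAntidiagonal.mem_antidiagonal] at hp
    rcases eq_or_ne p.1 (Finsupp.single i (p.1 i)) with h1 | h1
    · rcases eq_or_ne p.2 (Finsupp.single i (p.2 i)) with h2 | h2
      · exfalso
        apply h
        have : e = Finsupp.single i (p.1 i + p.2 i) := by
          rw [← hp, Finsupp.single_add]
          exact congrArg₂ (· + ·) h1 h2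
        rw [this]
        simp
      · rw [emb_coeff i ψ, if_neg h2, mul_zero]
    · rw [emb_coeff i φ, if_neg h1, zero_mul]

lemma emb_one {k : ℕ} (i : Fin k) : emb i (1 : PowerSeries ℚ) = 1 := by
  ext e
  rw [emb_coeff, MvPowerSeries.coeff_one]
  split_ifs with h1 h2 h2
  · rw [h2]; simp [PowerSeries.coeff_one]
  · rw [PowerSeries.coeff_one, if_neg]
    intro h3
    apply h2
    rw [h1, h3, Finsupp.single_zero]
  · exfalso; apply h1; rw [h2]; simp
  · rfl

lemma emb_sub {k : ℕ} (i : Fin k) (φ ψ : PowerSeries ℚ) :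
    emb i (φ - ψ) = emb i φ - emb i ψ := by
  ext e
  rw [map_sub, emb_coeff, emb_coeff, emb_coeff]
  split_ifs with h
  · rw [map_sub]
  · rw [sub_zero]

lemma emb_X {k : ℕ} (i : Fin k) : emb i (PowerSeries.X : PowerSeries ℚ) = MvPowerSeries.X i := by
  ext e
  rw [emb_coeff, MvPowerSeries.coeff_X, PowerSeries.coeff_X]
  by_cases h3 : e = Finsupp.single i 1
  · subst h3
    simp
  · rw [if_neg h3]
    split_ifs with h1 h2
    · exact absurd (h1.trans (by rw [h2])) h3
    · rfl
    · rfl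

lemma emb_one_sub_X_pow {k : ℕ} (i : Fin k) (n : ℕ) :
    emb i ((1 - PowerSeries.X : PowerSeries ℚ) ^ n) = (1 - MvPowerSeries.X i) ^ n := by
  induction n with
  | zero => simpa using emb_one i
  | succ n ih =>
    rw [pow_succ, pow_succ, emb_mul, ih, emb_sub, emb_one, emb_X]

lemma one_sub_X_pow_mul_emb_mk {k : ℕ} (i : Fin k) (r : ℕ) :
    (1 - MvPowerSeries.X i) ^ (r + 1)
        * emb i (PowerSeries.mk fun n => ((r + n).choose r : ℚ)) = 1 := by
  rw [← emb_one_sub_X_pow, ← emb_mul, mul_comm,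
    PowerSeries.mk_add_choose_mul_one_sub_pow_eq_one, emb_one]

lemma coeff_prod_emb {k : ℕ} (t : Finset (Fin k)) (φ : Fin k → PowerSeries ℚ)
    (n : Fin k →₀ ℕ) :
    MvPowerSeries.coeff n (∏ i ∈ t, emb i (φ i))
      = if ∀ j, j ∉ t → n j = 0 then ∏ i ∈ t, PowerSeries.coeff (n i) (φ i) else 0 := by
  induction t using Finset.induction_on generalizing n with
  | empty =>
    rw [Finset.prod_empty, MvPowerSeries.coeff_one]
    by_cases h : n = 0
    · subst h; simp
    · rw [if_neg h, if_neg]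
      intro hall
      exact h (Finsupp.ext fun j => hall j (Finset.notMem_empty j))
  | @insert a s ha ih =>
    rw [Finset.prod_insert ha, MvPowerSeries.coeff_mul]
    by_cases hcond : ∀ j, j ∉ insert a s → n j = 0
    · rw [if_pos hcond]
      have hle : Finsupp.single a (n a) ≤ n := by
        intro j
        rcases eq_or_ne j a with rfl | hj
        · simp
        · simp [Finsupp.single_eq_of_ne' (Ne.symm hj)]
      have hmem : (Finsupp.single a (n a), n - Finsupp.single a (n a))
          ∈ Finset.HasAntidiagonal.antidiagonal n := by
        rw [Finset.HasAntidiagonal.mem_antidiagonal]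
        exact add_tsub_cancel_of_le hle
      rw [Finset.sum_eq_single (Finsupp.single a (n a), n - Finsupp.single a (n a))]
      · rw [emb_coeff_single, ih]
        rw [if_pos, Finset.prod_insert ha]
        · congr 1
          apply Finset.prod_congr rfl
          intro i hi
          congr 1
          rw [Finsupp.tsub_apply, Finsupp.single_eq_of_ne', Nat.sub_zero]
          intro h; exact ha (h ▸ hi)
        · intro j hj
          rw [Finsupp.tsub_apply]
          rcases eq_or_ne j a with rfl | hne
          · simp
          · rw [Finsupp.single_eq_of_ne' (Ne.symm hne), Nat.sub_zero]
            exact hcond j (by simp [hne, hj])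
      · intro p hp hne
        by_contra hzero
        have hp1 : p.1 = Finsupp.single a (p.1 a) := by
          by_contra h1
          rw [emb_coeff, if_neg h1, zero_mul] at hzero
          exact hzero rfl
        have hp2 : ∀ j, j ∉ s → p.2 j = 0 := by
          by_contra h2
          push_neg at h2
          rw [ih, if_neg, mul_zero] at hzero
          · exact hzero rfl
          · push_neg
            exact h2
        rw [Finset.HasAntidiagonal.mem_antidiagonal] at hp
        have hpa : p.1 a = n a := by
          have := DFunLike.congr_fun hp a
          simp only [Finsupp.add_apply] at this
          rw [hp2 a ha, Nat.add_zero] at this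
          exact this
        apply hne
        have h1 : p.1 = Finsupp.single a (n a) := by rw [hp1, hpa]
        have h2 : p.2 = n - Finsupp.single a (n a) := by
          rw [← h1, ← hp]; simp
        exact Prod.ext h1 h2
      · intro h
        exact absurd hmem h
    · rw [if_neg hcond]
      push_neg at hcond
      obtain ⟨j, hj, hnj⟩ := hcond
      simp only [Finset.mem_insert, not_or] at hj
      apply Finset.sum_eq_zero
      intro p hp
      rw [Finset.HasAntidiagonal.mem_antidiagonal] at hp
      by_contra hzero
      have hp1 : p.1 = Finsupp.single a (p.1 a) := by
        by_contra h1
        rw [emb_coeff, if_neg h1, zero_mul] at hzero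
        exact hzero rfl
      have hp1j : p.1 j = 0 := by rw [hp1, Finsupp.single_eq_of_ne']; exact fun h => hj.1 h.symm
      have hp2j : p.2 j = 0 := by
        by_contra h2
        rw [ih, if_neg, mul_zero] at hzero
        · exact hzero rfl
        · push_neg
          exact ⟨j, hj.2, h2⟩
      apply hnj
      have := DFunLike.congr_fun hp j
      simp only [Finsupp.add_apply] at this
      rw [hp1j, hp2j] at this
      exact this.symm

noncomputable def QQ {k : ℕ} (i : Fin k) (q : Polynomial ℚ) : MvPolynomial (Fin k) ℚ :=
  q.sum fun t c => MvPolynomial.monomial (Finsupp.single i t) c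

lemma coeff_QQ {k : ℕ} (i : Fin k) (q : Polynomial ℚ) (m : Fin k →₀ ℕ) :
    MvPolynomial.coeff m (QQ i q)
      = if m = Finsupp.single i (m i) then q.coeff (m i) else 0 := by
  rw [QQ, Polynomial.sum]
  rw [MvPolynomial.coeff_sum]
  simp only [MvPolynomial.coeff_monomial]
  split_ifs with h
  · have : ∀ t, (Finsupp.single i t = m) ↔ t = m i := by
      intro t
      constructor
      · intro ht; rw [← ht, Finsupp.single_eq_same]
      · intro ht; rw [ht, ← h]
    simp only [this]
    rw [Finset.sum_ite_eq' q.support (m i) (fun t => q.coeff t)]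
    split_ifs with h2
    · rfl
    · exact (Polynomial.notMem_support_iff.mp h2).symm
  · apply Finset.sum_eq_zero
    intro t ht
    rw [if_neg]
    intro he
    apply h
    rw [← he, Finsupp.single_eq_same]

lemma eval_QQ {k : ℕ} (i : Fin k) (q : Polynomial ℚ) (g : Fin k → ℚ) :
    MvPolynomial.eval g (QQ i q) = q.eval (g i) := by
  rw [QQ, Polynomial.sum, map_sum]
  rw [Polynomial.eval_eq_sum, Polynomial.sum]
  apply Finset.sum_congr rfl
  intro t ht
  rw [MvPolynomial.eval_monomial]
  congr 1
  exact Finsupp.prod_single_index (pow_zero _)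

lemma coeff_prod_QQ {k : ℕ} (t : Finset (Fin k)) (q : Fin k → Polynomial ℚ)
    (n : Fin k →₀ ℕ) :
    MvPolynomial.coeff n (∏ i ∈ t, QQ i (q i))
      = if ∀ j, j ∉ t → n j = 0 then ∏ i ∈ t, (q i).coeff (n i) else 0 := by
  induction t using Finset.induction_on generalizing n with
  | empty =>
    rw [Finset.prod_empty, MvPolynomial.coeff_one]
    by_cases h : n = 0
    · subst h; simp
    · rw [if_neg (fun he => h he.symm), if_neg]
      intro hall
      exact h (Finsupp.ext fun j => hall j (Finset.notMem_empty j))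
  | @insert a s ha ih =>
    rw [Finset.prod_insert ha, MvPolynomial.coeff_mul]
    by_cases hcond : ∀ j, j ∉ insert a s → n j = 0
    · rw [if_pos hcond]
      have hle : Finsupp.single a (n a) ≤ n := by
        intro j
        rcases eq_or_ne j a with rfl | hj
        · simp
        · simp [Finsupp.single_eq_of_ne' (Ne.symm hj)]
      have hmem : (Finsupp.single a (n a), n - Finsupp.single a (n a))
          ∈ Finset.HasAntidiagonal.antidiagonal n := by
        rw [Finset.HasAntidiagonal.mem_antidiagonal]
        exact add_tsub_cancel_of_le hle
      rw [Finset.sum_eq_single (Finsupp.single a (n a), n - Finsupp.single a (n a))]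
      · rw [coeff_QQ, if_pos (by simp), Finsupp.single_eq_same, ih]
        rw [if_pos, Finset.prod_insert ha]
        · congr 1
          apply Finset.prod_congr rfl
          intro i hi
          congr 1
          rw [Finsupp.tsub_apply, Finsupp.single_eq_of_ne', Nat.sub_zero]
          intro h; exact ha (h ▸ hi)
        · intro j hj
          rw [Finsupp.tsub_apply]
          rcases eq_or_ne j a with rfl | hne
          · simp
          · rw [Finsupp.single_eq_of_ne' (Ne.symm hne), Nat.sub_zero]
            exact hcond j (by simp [hne, hj])
      · intro p hp hne
        by_contra hzero
        have hp1 : p.1 = Finsupp.single a (p.1 a) := by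
          by_contra h1
          rw [coeff_QQ, if_neg h1, zero_mul] at hzero
          exact hzero rfl
        have hp2 : ∀ j, j ∉ s → p.2 j = 0 := by
          by_contra h2
          push_neg at h2
          rw [ih, if_neg, mul_zero] at hzero
          · exact hzero rfl
          · push_neg
            exact h2
        rw [Finset.HasAntidiagonal.mem_antidiagonal] at hp
        have hpa : p.1 a = n a := by
          have := DFunLike.congr_fun hp a
          simp only [Finsupp.add_apply] at this
          rw [hp2 a ha, Nat.add_zero] at this
          exact this
        apply hne
        have h1 : p.1 = Finsupp.single a (n a) := by rw [hp1, hpa]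
        have h2 : p.2 = n - Finsupp.single a (n a) := by
          rw [← h1, ← hp]; simp
        exact Prod.ext h1 h2
      · intro h
        exact absurd hmem h
    · rw [if_neg hcond]
      push_neg at hcond
      obtain ⟨j, hj, hnj⟩ := hcond
      simp only [Finset.mem_insert, not_or] at hj
      apply Finset.sum_eq_zero
      intro p hp
      rw [Finset.HasAntidiagonal.mem_antidiagonal] at hp
      by_contra hzero
      have hp1 : p.1 = Finsupp.single a (p.1 a) := by
        by_contra h1
        rw [coeff_QQ, if_neg h1, zero_mul] at hzero
        exact hzero rfl
      have hp1j : p.1 j = 0 := by rw [hp1, Finsupp.single_eq_of_ne']; exact fun h => hj.1 h.symm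
      have hp2j : p.2 j = 0 := by
        by_contra h2
        rw [ih, if_neg, mul_zero] at hzero
        · exact hzero rfl
        · push_neg
          exact ⟨j, hj.2, h2⟩
      apply hnj
      have := DFunLike.congr_fun hp j
      simp only [Finsupp.add_apply] at this
      rw [hp1j, hp2j] at this
      exact this.symm

lemma nat_prod_choose (t r : ℕ) :
    ∏ j ∈ Finset.range r, (t + j + 1) = r.factorial * (t + r).choose r := by
  have : ∏ j ∈ Finset.range r, (t + j + 1) = (t + 1).ascFactorial r := by
    induction r with
    | zero => simp
    | succ r ih =>
      rw [Finset.prod_range_succ, ih, Nat.ascFactorial_succ]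
      ring
  rw [this, Nat.ascFactorial_eq_factorial_mul_choose]

noncomputable def qpoly (r a : ℕ) : Polynomial ℚ :=
  Polynomial.C ((r.factorial : ℚ)⁻¹)
    * ∏ j ∈ Finset.range r, (Polynomial.X + Polynomial.C ((j : ℚ) + 1 - a))

lemma qpoly_monic_part_monic (r a : ℕ) :
    (∏ j ∈ Finset.range r, (Polynomial.X + Polynomial.C ((j : ℚ) + 1 - a))).Monic :=
  Polynomial.monic_prod_of_monic _ _ fun j _ => Polynomial.monic_X_add_C _

lemma qpoly_monic_part_natDegree (r a : ℕ) :
    (∏ j ∈ Finset.range r, (Polynomial.X + Polynomial.C ((j : ℚ) + 1 - a))).natDegree = r := by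
  rw [Polynomial.natDegree_prod_of_monic _ _ fun j _ => Polynomial.monic_X_add_C _]
  simp only [Polynomial.natDegree_X_add_C]
  rw [Finset.sum_const, smul_eq_mul, mul_one, Finset.card_range]

lemma qpoly_natDegree_le (r a : ℕ) : (qpoly r a).natDegree ≤ r := by
  refine le_trans (Polynomial.natDegree_mul_le) ?_
  rw [Polynomial.natDegree_C, qpoly_monic_part_natDegree]
  simp

lemma qpoly_coeff_top (r a : ℕ) : (qpoly r a).coeff r = (r.factorial : ℚ)⁻¹ := by
  rw [qpoly, Polynomial.coeff_C_mul]
  have h1 := qpoly_monic_part_monic r a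
  have h2 := qpoly_monic_part_natDegree r a
  have h3 := Polynomial.Monic.coeff_natDegree h1
  rw [h2] at h3
  rw [h3, mul_one]

lemma qpoly_eval (r a s : ℕ) (has : a ≤ s) :
    (qpoly r a).eval (s : ℚ) = ((r + (s - a)).choose r : ℚ) := by
  rw [qpoly, Polynomial.eval_mul, Polynomial.eval_C, Polynomial.eval_prod]
  have hfac : ∀ j ∈ Finset.range r,
      Polynomial.eval (s:ℚ) (Polynomial.X + Polynomial.C ((j : ℚ) + 1 - a))
        = (((s - a) + j + 1 : ℕ) : ℚ) := by
    intro j _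
    rw [Polynomial.eval_add, Polynomial.eval_X, Polynomial.eval_C]
    push_cast [Nat.cast_sub has]
    ring
  rw [Finset.prod_congr rfl hfac, ← Nat.cast_prod, nat_prod_choose]
  push_cast
  rw [← mul_assoc, inv_mul_cancel₀ (by exact_mod_cast (Nat.factorial_pos r).ne'), one_mul,
    Nat.add_comm]

/-- **Lemma 1.2.** If `(1-Y₁)^{d₁}⋯(1-Y_k)^{d_k} · G_f = R` for a polynomial `R` of
degree at most `m̄`, then there is a polynomial `P` of degree at most
`(d₁-1,…,d_k-1)` with `f(s̄) = P(s̄)` for all `s̄ ≽ m̄`, whose coefficient at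
`Y₁^{d₁-1}⋯Y_k^{d_k-1}` equals `R(1,…,1)/((d₁-1)!⋯(d_k-1)!)`. -/
theorem statement6 {k : ℕ} (d : Fin k → ℕ) (hd : ∀ i, 1 ≤ d i) (f : (Fin k → ℕ) → ℕ)
    (R : MvPolynomial (Fin k) ℚ) (mbar : Fin k → ℕ) (hdeg : ∀ i, R.degreeOf i ≤ mbar i)
    (hEq : (∏ i, (1 - MvPowerSeries.X i) ^ d i) * genFun f = (R : MvPowerSeries (Fin k) ℚ)) :
    ∃ P : MvPolynomial (Fin k) ℚ, (∀ i, P.degreeOf i ≤ d i - 1) ∧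
      (∀ s : Fin k → ℕ, (∀ i, mbar i ≤ s i) →
        MvPolynomial.eval (fun i => (s i : ℚ)) P = f s) ∧
      MvPolynomial.coeff (expOf fun i => d i - 1) P
        = MvPolynomial.eval (fun _ => (1 : ℚ)) R / ∏ i, ((d i - 1).factorial : ℚ) := by
  classical
  set r : Fin k → ℕ := fun i => d i - 1 with hr
  -- the inverse series B
  set φ : Fin k → PowerSeries ℚ :=
    fun i => PowerSeries.mk fun n => ((r i + n).choose (r i) : ℚ) with hφ
  set B : MvPowerSeries (Fin k) ℚ := ∏ i, emb i (φ i) with hB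
  have hAB : (∏ i, (1 - MvPowerSeries.X i) ^ d i) * B = 1 := by
    rw [hB, ← Finset.prod_mul_distrib]
    apply Finset.prod_eq_one
    intro i _
    have h := one_sub_X_pow_mul_emb_mk i (r i)
    rwa [hr, Nat.sub_add_cancel (hd i)] at h
  have hG : genFun f = (R : MvPowerSeries (Fin k) ℚ) * B := by
    rw [← hEq, mul_comm (∏ i, (1 - MvPowerSeries.X i) ^ d i) (genFun f), mul_assoc, hAB,
      mul_one]
  -- coefficients of B
  have hBcoeff : ∀ n : Fin k →₀ ℕ,
      MvPowerSeries.coeff n B = ∏ i, ((r i + n i).choose (r i) : ℚ) := by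
    intro n
    rw [hB, coeff_prod_emb, if_pos (fun j hj => absurd (Finset.mem_univ j) hj)]
    simp [hφ, PowerSeries.coeff_mk]
  -- support of R is bounded by mbar
  have hsupp : ∀ u ∈ R.support, ∀ i, u i ≤ mbar i := by
    intro u hu i
    exact MvPolynomial.degreeOf_le_iff.mp (hdeg i) u hu
  -- the explicit coefficient formula for f
  have hfs : ∀ s : Fin k → ℕ, (∀ i, mbar i ≤ s i) →
      (f s : ℚ) = ∑ u ∈ R.support, MvPolynomial.coeff u R
        * ∏ i, ((r i + (s i - u i)).choose (r i) : ℚ) := by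
    intro s hms
    have h1 : (f s : ℚ) = MvPowerSeries.coeff (expOf s) (genFun f) := rfl
    rw [h1, hG, MvPowerSeries.coeff_mul]
    have hle : ∀ u ∈ R.support, u ≤ expOf s := by
      intro u hu j
      exact le_trans (hsupp u hu j) (hms j)
    rw [Finset.sum_congr rfl (fun p _ => by
      rw [MvPolynomial.coeff_coe, hBcoeff] :
        ∀ p ∈ Finset.HasAntidiagonal.antidiagonal (expOf s), _ = MvPolynomial.coeff p.1 R
          * ∏ i, ((r i + p.2 i).choose (r i) : ℚ))]
    rw [← Finset.sum_filter_of_ne (p := fun p => p.1 ∈ R.support)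
      (fun p _ hne => by
        by_contra hmem
        rw [MvPolynomial.notMem_support_iff.mp hmem, zero_mul] at hne
        exact hne rfl)]
    refine Finset.sum_bij' (fun p _ => p.1) (fun u _ => (u, expOf s - u)) ?_ ?_ ?_ ?_ ?_
    · intro p hp
      exact (Finset.mem_filter.mp hp).2
    · intro u hu
      rw [Finset.mem_filter, Finset.HasAntidiagonal.mem_antidiagonal]
      exact ⟨add_tsub_cancel_of_le (hle u hu), hu⟩
    · intro p hp
      have hpa := Finset.HasAntidiagonal.mem_antidiagonal.mp (Finset.mem_filter.mp hp).1
      have : p.2 = expOf s - p.1 := eq_tsub_of_add_eq (by rw [add_comm]; exact hpa)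
      exact Prod.ext rfl this.symm
    · intro u hu
      rfl
    · intro p hp
      have hpa := Finset.HasAntidiagonal.mem_antidiagonal.mp (Finset.mem_filter.mp hp).1
      have h2 : p.2 = expOf s - p.1 := eq_tsub_of_add_eq (by rw [add_comm]; exact hpa)
      rw [h2]
      congr 1
  -- define the polynomial P
  refine ⟨∑ u ∈ R.support, MvPolynomial.C (MvPolynomial.coeff u R)
    * ∏ i, QQ i (qpoly (r i) (u i)), ?_, ?_, ?_⟩
  · -- degree bound
    intro i
    rw [MvPolynomial.degreeOf_le_iff]
    intro m hm
    by_contra hlt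
    push_neg at hlt
    apply MvPolynomial.mem_support_iff.mp hm
    rw [MvPolynomial.coeff_sum]
    apply Finset.sum_eq_zero
    intro u hu
    rw [MvPolynomial.coeff_C_mul, coeff_prod_QQ,
      if_pos (fun j hj => absurd (Finset.mem_univ j) hj)]
    rw [Finset.prod_eq_zero (Finset.mem_univ i)
      (Polynomial.coeff_eq_zero_of_natDegree_lt (lt_of_le_of_lt (qpoly_natDegree_le _ _) hlt)),
      mul_zero]
  · -- evaluation
    intro s hms
    rw [hfs s hms, map_sum]
    apply Finset.sum_congr rfl
    intro u hu
    rw [map_mul, MvPolynomial.eval_C, map_prod]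
    congr 1
    apply Finset.prod_congr rfl
    intro i _
    rw [eval_QQ, qpoly_eval _ _ _ (le_trans (hsupp u hu i) (hms i))]
  · -- top coefficient
    rw [MvPolynomial.coeff_sum]
    have hD : ∀ j : Fin k, (expOf fun i => d i - 1) j = r j := fun j => rfl
    have hterm : ∀ u ∈ R.support,
        MvPolynomial.coeff (expOf fun i => d i - 1)
          (MvPolynomial.C (MvPolynomial.coeff u R) * ∏ i, QQ i (qpoly (r i) (u i)))
          = MvPolynomial.coeff u R * ∏ i, ((r i).factorial : ℚ)⁻¹ := by
      intro u _
      rw [MvPolynomial.coeff_C_mul, coeff_prod_QQ,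
        if_pos (fun j hj => absurd (Finset.mem_univ j) hj)]
      congr 1
      apply Finset.prod_congr rfl
      intro i _
      rw [hD, qpoly_coeff_top]
    rw [Finset.sum_congr rfl hterm, ← Finset.sum_mul]
    have heval : MvPolynomial.eval (fun _ => (1 : ℚ)) R
        = ∑ u ∈ R.support, MvPolynomial.coeff u R := by
      rw [MvPolynomial.eval_eq]
      apply Finset.sum_congr rfl
      intro u _
      simp
    rw [heval, div_eq_mul_inv, Finset.prod_inv_distrib]
end

section
/- If f : ℕ^k → ℕ is decreasing, then (1−Y₁)⋯(1−Y_k) · G_f(Ȳ) is a polynomial of degree at most m̄(f); equivalently, G_f is a rational function with numerator a polynomial of degree at most m̄(f) and denominator (1−Y₁)⋯(1−Y_k). -/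
/-- `m̄(f)`: the coordinatewise least upper bound of the set `M(f)` of all points of
`ℕ^k` which, for some `n`, are `≼`-minimal subject to `f ≤ n`.  (Here `≼` is the
product order, which is the order of the pi type `Fin k → ℕ`.) -/
noncomputable def mbarOf {k : ℕ} (f : (Fin k → ℕ) → ℕ) : Fin k → ℕ :=
  fun i => sSup {t : ℕ | ∃ r : Fin k → ℕ,
    (∃ n : ℕ, Minimal (fun u => f u ≤ n) r) ∧ r i = t}

section Aux

variable {k : ℕ} (f : (Fin k → ℕ) → ℕ)

/-- Below every point of `S_n(f)` there is a minimal point. -/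
lemma exists_minimal_le_aux (n : ℕ) :
    ∀ N (r : Fin k → ℕ), (∑ i, r i) ≤ N → f r ≤ n →
      ∃ m, Minimal (fun u => f u ≤ n) m ∧ m ≤ r := by
  intro N
  induction N with
  | zero =>
    intro r hsum hr
    have h0 : ∀ i, r i = 0 := by
      intro i
      have h1 : r i ≤ ∑ x, r x := by
        simpa using Finset.single_le_sum (f := fun i => r i) (fun i _ => Nat.zero_le _)
          (Finset.mem_univ i)
      omega
    refine ⟨r, ⟨hr, ?_⟩, le_rfl⟩
    intro u hu hur i
    rw [h0 i]
    exact Nat.zero_le _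
  | succ N ih =>
    intro r hsum hr
    by_cases hmin : ∀ u, f u ≤ n → u ≤ r → r ≤ u
    · refine ⟨r, ⟨hr, ?_⟩, le_rfl⟩
      intro u hu hur
      exact hmin u hu hur
    · push_neg at hmin
      obtain ⟨u, hu, hur, hru⟩ := hmin
      have hlt : ∑ i, u i < ∑ i, r i := by
        rw [Pi.le_def] at hur; rw [Pi.le_def] at hru; push_neg at hru
        obtain ⟨i0, hi0⟩ := hru
        exact Finset.sum_lt_sum (fun i _ => hur i) ⟨i0, Finset.mem_univ _, hi0⟩
      obtain ⟨m, hm, hmu⟩ := ih u (by omega) hu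
      exact ⟨m, hm, hmu.trans hur⟩

lemma exists_minimal_le (n : ℕ) (r : Fin k → ℕ) (hr : f r ≤ n) :
    ∃ m, Minimal (fun u => f u ≤ n) m ∧ m ≤ r :=
  exists_minimal_le_aux f n (∑ i, r i) r le_rfl hr

/-- The set of all minimal points (Dickson's lemma). -/
lemma M_finite (hf : ∀ r s : Fin k → ℕ, (∀ i, s i ≤ r i) → f r ≤ f s) :
    {r : Fin k → ℕ | ∃ n, Minimal (fun u => f u ≤ n) r}.Finite := by
  have h1 : ∀ n : ℕ, {r : Fin k → ℕ | Minimal (fun u => f u ≤ n) r}.Finite := by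
    intro n
    have hanti : IsAntichain (· ≤ ·) {r : Fin k → ℕ | Minimal (fun u => f u ≤ n) r} := by
      intro a ha b hb hab hle
      exact hab (le_antisymm hle (hb.2 ha.1 hle))
    haveI : IsWellOrder ℕ (· < ·) := inferInstance
    exact hanti.finite_of_partiallyWellOrderedOn
      (Set.isPWO_of_wellQuasiOrderedLE _)
  have hsub : {r : Fin k → ℕ | ∃ n, Minimal (fun u => f u ≤ n) r} ⊆
      (⋃ n ∈ Set.Iic (f (fun _ => 0)), {r : Fin k → ℕ | Minimal (fun u => f u ≤ n) r}) ∪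
        {fun _ => 0} := by
    rintro r ⟨n, hn⟩
    by_cases hle : n ≤ f (fun _ => 0)
    · exact Or.inl (Set.mem_biUnion hle hn)
    · right
      have h0 : f (fun _ => 0) ≤ n := le_of_lt (lt_of_not_ge hle)
      have := hn.2 h0 (fun i => Nat.zero_le _)
      exact le_antisymm (fun i => Nat.le_zero.mpr (Nat.le_zero.mp (this i))) (fun i => Nat.zero_le _)
  exact Set.Finite.subset (Set.Finite.union
    (Set.Finite.biUnion (Set.finite_Iic _) (fun n _ => h1 n)) (Set.finite_singleton _)) hsub

lemma coord_le_mbar (hf : ∀ r s : Fin k → ℕ, (∀ i, s i ≤ r i) → f r ≤ f s)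
    {m : Fin k → ℕ} (hm : ∃ n, Minimal (fun u => f u ≤ n) m) (i : Fin k) :
    m i ≤ mbarOf f i := by
  have hset : {t : ℕ | ∃ r : Fin k → ℕ,
      (∃ n : ℕ, Minimal (fun u => f u ≤ n) r) ∧ r i = t} =
      (fun r => r i) '' {r : Fin k → ℕ | ∃ n, Minimal (fun u => f u ≤ n) r} := by
    ext t
    constructor
    · rintro ⟨r, h1, h2⟩; exact ⟨r, h1, h2⟩
    · rintro ⟨r, h1, h2⟩; exact ⟨r, h1, h2⟩
  have hb : BddAbove {t : ℕ | ∃ r : Fin k → ℕ,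
      (∃ n : ℕ, Minimal (fun u => f u ≤ n) r) ∧ r i = t} := by
    rw [hset]
    exact ((M_finite f hf).image (fun r => r i)).bddAbove
  exact le_csSup hb ⟨m, hm, rfl⟩

/-- Key pointwise lemma: past `m̄(f)` in direction `j`, `f` is constant. -/
lemma stepA (hf : ∀ r s : Fin k → ℕ, (∀ i, s i ≤ r i) → f r ≤ f s)
    {r r' : Fin k → ℕ} {j : Fin k} (hj : mbarOf f j < r j)
    (hr' : ∀ i, r' i = if i = j then r j - 1 else r i) : f r' = f r := by
  refine le_antisymm ?_ (hf r r' (fun i => by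
    rw [hr' i]; split_ifs with h
    · subst h; omega
    · exact le_rfl))
  obtain ⟨m, hm, hmr⟩ := exists_minimal_le f (f r) r le_rfl
  have h1 : m j ≤ mbarOf f j := coord_le_mbar f hf ⟨_, hm⟩ j
  have h2 : ∀ i, m i ≤ r' i := by
    intro i
    rw [hr' i]
    split_ifs with h
    · subst h
      have := hmr i
      omega
    · exact hmr i
  exact le_trans (hf r' m h2) hm.1

open MvPowerSeries Finsupp in
lemma prod_vanish (j : Fin k) :
    ∀ s : Finset (Fin k), j ∉ s → ∀ a : Fin k →₀ ℕ, a j ≠ 0 →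
      MvPowerSeries.coeff a (∏ i ∈ s, (1 - MvPowerSeries.X i : MvPowerSeries (Fin k) ℚ)) = 0 := by
  classical
  intro s
  induction s using Finset.induction_on with
  | empty =>
    intro _ a ha
    rw [Finset.prod_empty, coeff_one, if_neg]
    intro h; subst h; simp at ha
  | @insert i s hi ih =>
    intro hjs a ha
    have hji : j ≠ i := fun h => hjs (h ▸ Finset.mem_insert_self i s)
    have hjs' : j ∉ s := fun h => hjs (Finset.mem_insert_of_mem h)
    have ih' := ih hjs'
    rw [Finset.prod_insert hi, coeff_mul]
    apply Finset.sum_eq_zero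
    intro p hp
    rw [Finset.HasAntidiagonal.mem_antidiagonal] at hp
    have hsum : p.1 j + p.2 j = a j := by rw [← hp]; simp
    by_cases h1 : p.1 j = 0
    · have h2 : p.2 j ≠ 0 := by omega
      rw [ih' p.2 h2, mul_zero]
    · have : MvPowerSeries.coeff p.1 (1 - X i : MvPowerSeries (Fin k) ℚ) = 0 := by
        rw [map_sub, coeff_one, coeff_X, if_neg, if_neg, sub_zero]
        · intro h
          apply h1
          rw [h, Finsupp.single_apply, if_neg (fun hh => hji hh.symm)]
        · intro h; apply h1; rw [h]; simp
      rw [this, zero_mul]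

open MvPowerSeries Finsupp in
lemma coeff_shift (hf : ∀ r s : Fin k → ℕ, (∀ i, s i ≤ r i) → f r ≤ f s)
    (j : Fin k) (Q : MvPowerSeries (Fin k) ℚ)
    (hQ : ∀ a : Fin k →₀ ℕ, a j ≠ 0 → MvPowerSeries.coeff a Q = 0)
    (d : Fin k →₀ ℕ) (hd : mbarOf f j < d j) :
    MvPowerSeries.coeff d (Q * genFun f) =
      MvPowerSeries.coeff (d - Finsupp.single j 1) (Q * genFun f) := by
  classical
  have hgen : ∀ b : Fin k →₀ ℕ, MvPowerSeries.coeff b (genFun f) = (f (fun i => b i) : ℚ) :=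
    fun b => rfl
  rw [coeff_mul, coeff_mul]
  rw [← Finset.sum_filter_of_ne (p := fun p : (Fin k →₀ ℕ) × (Fin k →₀ ℕ) => p.1 j = 0)
    (fun p _ hne => by
      by_contra h
      exact hne (by rw [hQ p.1 h, zero_mul])),
    ← Finset.sum_filter_of_ne (s := Finset.HasAntidiagonal.antidiagonal (d - Finsupp.single j 1))
    (p := fun p : (Fin k →₀ ℕ) × (Fin k →₀ ℕ) => p.1 j = 0)
    (fun p _ hne => by
      by_contra h
      exact hne (by rw [hQ p.1 h, zero_mul]))]
  refine Finset.sum_bij' (fun p _ => (p.1, p.2 - Finsupp.single j 1))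
    (fun p _ => (p.1, p.2 + Finsupp.single j 1)) ?_ ?_ ?_ ?_ ?_
  · rintro ⟨a, b⟩ hab
    simp only [Finset.mem_filter, Finset.HasAntidiagonal.mem_antidiagonal] at hab ⊢
    obtain ⟨hab, haj⟩ := hab
    have hco : ∀ i, a i + b i = d i := fun i => by rw [← hab]; simp
    refine ⟨?_, haj⟩
    ext i
    have hi := hco i
    simp only [Finsupp.add_apply, Finsupp.tsub_apply]
    rcases eq_or_ne i j with h | h
    · subst h
      rw [Finsupp.single_eq_same]
      omega
    · rw [Finsupp.single_eq_of_ne' (Ne.symm h)]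
      omega
  · rintro ⟨a, b⟩ hab
    simp only [Finset.mem_filter, Finset.HasAntidiagonal.mem_antidiagonal] at hab ⊢
    obtain ⟨hab, haj⟩ := hab
    have hco : ∀ i, a i + b i = (d - Finsupp.single j 1 : Fin k →₀ ℕ) i := fun i => by
      rw [← hab]; simp
    refine ⟨?_, haj⟩
    ext i
    have hi := hco i
    simp only [Finsupp.add_apply, Finsupp.tsub_apply] at hi ⊢
    rcases eq_or_ne i j with h | h
    · subst h
      rw [Finsupp.single_eq_same] at hi ⊢
      omega
    · rw [Finsupp.single_eq_of_ne' (Ne.symm h)] at hi ⊢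
      omega
  · rintro ⟨a, b⟩ hab
    simp only [Finset.mem_filter, Finset.HasAntidiagonal.mem_antidiagonal] at hab
    obtain ⟨hab, haj⟩ := hab
    have hbj : 1 ≤ b j := by
      have : a j + b j = d j := by rw [← hab]; simp
      omega
    have hcan : b - Finsupp.single j 1 + Finsupp.single j 1 = b :=
      tsub_add_cancel_of_le (Finsupp.single_le_iff.mpr hbj)
    rw [Prod.mk.injEq]
    exact ⟨rfl, hcan⟩
  · rintro ⟨a, b⟩ _
    rw [Prod.mk.injEq]
    exact ⟨rfl, by rw [add_tsub_cancel_right]⟩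
  · rintro ⟨a, b⟩ hab
    simp only [Finset.mem_filter, Finset.HasAntidiagonal.mem_antidiagonal] at hab
    obtain ⟨hab, haj⟩ := hab
    have hbj : b j = d j := by
      have : a j + b j = d j := by rw [← hab]; simp
      omega
    simp only [hgen]
    congr 2
    refine (stepA f hf (r := fun i => b i)
      (r' := fun i => (b - Finsupp.single j 1 : Fin k →₀ ℕ) i)
      (j := j) (show mbarOf f j < b j by omega) ?_).symm
    intro i
    simp only [Finsupp.tsub_apply]
    rcases eq_or_ne i j with h | h
    · subst h
      rw [Finsupp.single_eq_same, if_pos rfl]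
    · rw [Finsupp.single_eq_of_ne' (Ne.symm h), if_neg h, Nat.sub_zero]

open MvPowerSeries Finsupp in
lemma coeff_P_vanish (hf : ∀ r s : Fin k → ℕ, (∀ i, s i ≤ r i) → f r ≤ f s)
    (d : Fin k →₀ ℕ) (j : Fin k) (hd : mbarOf f j < d j) :
    MvPowerSeries.coeff d
      ((∏ i, (1 - MvPowerSeries.X i : MvPowerSeries (Fin k) ℚ)) * genFun f) = 0 := by
  classical
  set Q : MvPowerSeries (Fin k) ℚ :=
    ∏ i ∈ Finset.univ.erase j, (1 - MvPowerSeries.X i : MvPowerSeries (Fin k) ℚ) with hQdef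
  have hprod : (∏ i, (1 - MvPowerSeries.X i : MvPowerSeries (Fin k) ℚ)) =
      (1 - MvPowerSeries.X j) * Q :=
    (Finset.mul_prod_erase _ _ (Finset.mem_univ j)).symm
  have hXj : (MvPowerSeries.X j : MvPowerSeries (Fin k) ℚ) =
      MvPowerSeries.monomial (Finsupp.single j 1) 1 := rfl
  rw [hprod, mul_assoc, sub_mul, one_mul, map_sub, hXj, coeff_monomial_mul,
    if_pos (Finsupp.single_le_iff.mpr (by omega)), one_mul]
  rw [coeff_shift f hf j Q (prod_vanish j _ (Finset.notMem_erase j _)) d hd]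
  ring

end Aux

/-- **Proposition 1.3.** If `f : ℕ^k → ℕ` is decreasing, then
`(1-Y₁)⋯(1-Y_k) · G_f` is (the power series of) a polynomial of degree at most
`m̄(f)`; i.e. `G_f` is rational with numerator of degree at most `m̄(f)` and
denominator `(1-Y₁)⋯(1-Y_k)`. -/
theorem statement7 {k : ℕ} (f : (Fin k → ℕ) → ℕ)
    (hf : ∀ r s : Fin k → ℕ, (∀ i, s i ≤ r i) → f r ≤ f s) :
    ∃ R : MvPolynomial (Fin k) ℚ, (∀ i, R.degreeOf i ≤ mbarOf f i) ∧
      (∏ i, (1 - MvPowerSeries.X i)) * genFun f = (R : MvPowerSeries (Fin k) ℚ) := by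
  classical
  set P : MvPowerSeries (Fin k) ℚ := (∏ i, (1 - MvPowerSeries.X i)) * genFun f with hP
  set mb : Fin k →₀ ℕ := Finsupp.equivFunOnFinite.symm (mbarOf f) with hmb
  have hmbi : ∀ i, mb i = mbarOf f i := fun i => rfl
  set R : MvPolynomial (Fin k) ℚ :=
    ∑ d ∈ Finset.Iic mb, MvPolynomial.monomial d (MvPowerSeries.coeff d P) with hR
  have hcoeff : ∀ m : Fin k →₀ ℕ,
      MvPolynomial.coeff m R = if m ≤ mb then MvPowerSeries.coeff m P else 0 := by
    intro m
    rw [hR, MvPolynomial.coeff_sum]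
    simp only [MvPolynomial.coeff_monomial]
    rw [Finset.sum_ite_eq' (Finset.Iic mb) m (fun d => MvPowerSeries.coeff d P)]
    simp [Finset.mem_Iic]
  refine ⟨R, ?_, ?_⟩
  · intro i
    rw [MvPolynomial.degreeOf_le_iff]
    intro m hm
    rw [MvPolynomial.mem_support_iff, hcoeff m] at hm
    by_cases hle : m ≤ mb
    · exact le_trans (hle i) (le_of_eq (hmbi i))
    · exact absurd (if_neg hle) hm
  · refine MvPowerSeries.ext fun d => ?_
    rw [MvPolynomial.coeff_coe, hcoeff d]
    by_cases hle : d ≤ mb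
    · rw [if_pos hle]
    · rw [if_neg hle]
      rw [Finsupp.le_def] at hle
      push_neg at hle
      obtain ⟨j, hj⟩ := hle
      rw [hmbi j] at hj
      exact coeff_P_vanish f hf d j hj
end

section
/- Suppose each Φᵢ (i = 1,…,k) is a triangular system for (X, cl), and let A ⊆ X be finite and B ⊆ X. Then the function f^Φ_{A|B} : ℕ^m → ℕ is decreasing: ū ≼ ū′ implies f^Φ_{A|B}(ū′) ≤ f^Φ_{A|B}(ū). Moreover, Σ_{ū ∈ ℕ^m, ‖ū‖ = s̄} f^Φ_{A|B}(ū) = rk(Φ^{(s̄)}(A) | Φ^{(s̄)}(B)) for every s̄ ∈ ℕ^k. -/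
open Set

/-- The lexicographic order on `ℕ^m` with emphasis on the last coordinate, for
exponents indexed by pairs `(i, j)` (`i : Fin k` major, `j : Fin (d i)` minor):
`r <_lex u` iff at some position `r` is smaller and they agree at all later
positions. -/
def lexLtOp {k : ℕ} {d : Fin k → ℕ} (r u : ∀ i : Fin k, Fin (d i) → ℕ) : Prop :=
  ∃ (i : Fin k) (j : Fin (d i)), r i j < u i j ∧
    (∀ j' : Fin (d i), j < j' → r i j' = u i j') ∧
    (∀ i' : Fin k, i < i' → ∀ j' : Fin (d i'), r i' j' = u i' j')

/-- `Θ_ū(A)`: images of elements of `A` under the operators `φ^r̄` with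
`‖r̄‖ = ‖ū‖` and `r̄ <_lex ū`. -/
def ThetaU {X : Type*} {k : ℕ} {d : Fin k → ℕ} (φ : ∀ i : Fin k, Fin (d i) → X → X)
    (u : ∀ i : Fin k, Fin (d i) → ℕ) (A : Set X) : Set X :=
  {x | ∃ r : ∀ i : Fin k, Fin (d i) → ℕ,
    (∀ i, ∑ j, r i j = ∑ j, u i j) ∧ lexLtOp r u ∧ ∃ a ∈ A, x = opPow φ r a}

/-- The function `f^Φ_{A|B}(ū) = rk(φ^ū(A) | Θ_ū(A) ∪ Φ^{(‖ū‖)}(B))`. -/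
noncomputable def fDim {X : Type*} {k : ℕ} {d : Fin k → ℕ} (M : FinMatroid X)
    (φ : ∀ i : Fin k, Fin (d i) → X → X) (A B : Set X)
    (u : ∀ i : Fin k, Fin (d i) → ℕ) : ℕ :=
  M.rk (opPow φ u '' A) (ThetaU φ u A ∪ PhiEq φ (fun i => ∑ j, u i j) B)

namespace FinMatroid

variable {X : Type*} (M : FinMatroid X)

lemma cl_le {A B : Set X} (h : A ⊆ M.cl B) : M.cl A ⊆ M.cl B := by
  have := M.cl_mono h; rwa [M.cl_idem] at this

lemma indep_mono {D I I' : Set X} (h : M.Indep D I) (hs : I' ⊆ I) : M.Indep D I' := by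
  intro b hb hbc
  exact h b (hs hb)
    (M.cl_mono (union_subset_union_right _ (diff_subset_diff_left hs)) hbc)

lemma exchange_erase {D S : Set X} {a : X} (hS : S.Finite)
    (ha : a ∈ M.cl (D ∪ S)) (ha' : a ∉ M.cl D) :
    ∃ s ∈ S, s ∈ M.cl ((D ∪ (S \ {s})) ∪ {a}) := by
  classical
  set P : Set ℕ := {n | ∃ T, T ⊆ S ∧ T.ncard = n ∧ a ∈ M.cl (D ∪ T)} with hP
  have hne : P.Nonempty := ⟨S.ncard, S, Subset.rfl, rfl, ha⟩
  obtain ⟨T, hTS, hTcard, haT⟩ := Nat.sInf_mem hne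
  have hTfin : T.Finite := hS.subset hTS
  have hTne : T.Nonempty := by
    rcases T.eq_empty_or_nonempty with h | h
    · exfalso; apply ha'; rwa [h, union_empty] at haT
    · exact h
  obtain ⟨s, hsT⟩ := hTne
  have hmin : a ∉ M.cl (D ∪ (T \ {s})) := by
    intro hmem
    have hlt : (T \ {s}).ncard < sInf P := by
      rw [← hTcard]; exact Set.ncard_diff_singleton_lt_of_mem hsT hTfin
    have hmemP : (T \ {s}).ncard ∈ P := ⟨T \ {s}, (diff_subset).trans hTS, rfl, hmem⟩
    exact absurd (Nat.sInf_le hmemP) (not_le.mpr hlt)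
  have hkey : a ∈ M.cl ((D ∪ (T \ {s})) ∪ {s}) := by
    have heq : (D ∪ (T \ {s})) ∪ {s} = D ∪ T := by
      rw [union_assoc]
      congr 1
      rw [Set.diff_union_self, union_eq_self_of_subset_right (singleton_subset_iff.mpr hsT)]
    rwa [heq]
  have := M.cl_exchange a s _ hkey hmin
  exact ⟨s, hTS hsT,
    M.cl_mono (union_subset_union_left _
      (union_subset_union_right _ (diff_subset_diff_left hTS))) this⟩

lemma replace (D : Set X) (I : Set X) (hI : I.Finite) :
    ∀ S : Set X, S.Finite → M.Indep D I → I ⊆ M.cl (D ∪ S) →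
    ∃ S', S' ⊆ S ∧ I.ncard + S'.ncard ≤ S.ncard ∧ S ⊆ M.cl ((D ∪ I) ∪ S') := by
  refine Set.Finite.induction_on (motive := fun I _ => ∀ S : Set X, S.Finite → M.Indep D I →
      I ⊆ M.cl (D ∪ S) →
      ∃ S', S' ⊆ S ∧ I.ncard + S'.ncard ≤ S.ncard ∧ S ⊆ M.cl ((D ∪ I) ∪ S')) I hI ?_ ?_
  case _ =>
    intro S hS _ _
    refine ⟨S, Subset.rfl, by simp, ?_⟩
    exact (subset_union_right).trans (M.subset_cl _)
  case _ =>
    intro i I₀ hiI₀ hI₀fin ih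
    intro S hS hind hsub
    have hindI₀ : M.Indep D I₀ := M.indep_mono hind (subset_insert _ _)
    have hsubI₀ : I₀ ⊆ M.cl (D ∪ S) := (subset_insert _ _).trans hsub
    obtain ⟨S₀, hS₀S, hcard₀, hspan₀⟩ := ih S hS hindI₀ hsubI₀
    have hS₀fin : S₀.Finite := hS.subset hS₀S
    have hDS : D ∪ S ⊆ M.cl ((D ∪ I₀) ∪ S₀) := by
      apply union_subset
      · exact (subset_union_left.trans subset_union_left).trans (M.subset_cl _)
      · exact hspan₀
    have hi1 : i ∈ M.cl ((D ∪ I₀) ∪ S₀) := M.cl_le hDS (hsub (mem_insert _ _))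
    have hi2 : i ∉ M.cl (D ∪ I₀) := by
      have := hind i (mem_insert _ _)
      rwa [Set.insert_diff_self_of_notMem hiI₀] at this
    obtain ⟨s, hsS₀, hskey⟩ := M.exchange_erase hS₀fin hi1 hi2
    refine ⟨S₀ \ {s}, (diff_subset).trans hS₀S, ?_, ?_⟩
    · have h1 : (insert i I₀).ncard = I₀.ncard + 1 := Set.ncard_insert_of_notMem hiI₀ hI₀fin
      have h2 : (S₀ \ {s}).ncard < S₀.ncard := Set.ncard_diff_singleton_lt_of_mem hsS₀ hS₀fin
      omega
    · have hbig : (D ∪ I₀) ∪ S₀ ⊆ M.cl ((D ∪ insert i I₀) ∪ (S₀ \ {s})) := by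
      -- D ∪ I₀ ⊆, S₀ \ {s} ⊆, and s ∈ cl via hskey
        apply union_subset
        · exact ((union_subset_union_right D (subset_insert _ _)).trans
            subset_union_left).trans (M.subset_cl _)
        · intro x hx
          by_cases hxs : x = s
          · subst hxs
            refine M.cl_mono ?_ hskey
            apply union_subset
            · apply union_subset
              · exact (union_subset_union_right D (subset_insert _ _)).trans subset_union_left
              · exact subset_union_right
            · intro y hy
              rcases hy with rfl
              exact Or.inl (Or.inr (mem_insert _ _))
          · exact M.subset_cl _ (Or.inr ⟨hx, hxs⟩)
      exact fun x hx => M.cl_le hbig (hspan₀ hx)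

lemma ncard_le_of_indep {D I S : Set X} (hI : I.Finite) (hS : S.Finite)
    (hind : M.Indep D I) (hsub : I ⊆ M.cl (D ∪ S)) : I.ncard ≤ S.ncard := by
  obtain ⟨S', _, hc, _⟩ := M.replace D I hI S hS hind hsub
  omega

end FinMatroid
namespace FinMatroid

variable {X : Type*} (M : FinMatroid X)

lemma indep_insert {D B₀ : Set X} (hind : M.Indep D B₀) {c : X}
    (hc : c ∉ M.cl (D ∪ B₀)) : M.Indep D (insert c B₀) := by
  have hcB₀ : c ∉ B₀ := fun h => hc (M.subset_cl _ (Or.inr h))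
  intro b hb
  rcases eq_or_ne b c with rfl | hbc
  · rwa [Set.insert_diff_self_of_notMem hcB₀]
  · have hbB₀ : b ∈ B₀ := hb.resolve_left hbc
    intro hmem
    have heq : insert c B₀ \ {b} = (B₀ \ {b}) ∪ {c} := by
      rw [Set.insert_diff_of_notMem _ (by simpa using hbc.symm)]
      rw [Set.union_singleton]
    rw [heq, ← union_assoc] at hmem
    have hb1 : b ∉ M.cl (D ∪ (B₀ \ {b})) := hind b hbB₀
    have := M.cl_exchange b c _ hmem hb1
    apply hc
    refine M.cl_mono ?_ this
    rw [union_assoc]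
    apply union_subset_union_right
    rw [Set.diff_union_self, union_eq_self_of_subset_right (singleton_subset_iff.mpr hbB₀)]

lemma exists_basis (D : Set X) {C : Set X} (hC : C.Finite) :
    ∃ B₀, M.IsBasisOver D C B₀ ∧ B₀.Finite := by
  classical
  set P : Set ℕ := {n | ∃ B₀, B₀ ⊆ C ∧ M.Indep D B₀ ∧ B₀.ncard = n} with hP
  have hne : P.Nonempty := ⟨0, ∅, empty_subset _, fun b hb => absurd hb (notMem_empty b), Set.ncard_empty _⟩
  have hbdd : BddAbove P := by
    refine ⟨C.ncard, fun n hn => ?_⟩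
    obtain ⟨B₀, hsub, _, rfl⟩ := hn
    exact Set.ncard_le_ncard hsub hC
  obtain ⟨B₀, hsub, hind, hcard⟩ := Nat.sSup_mem hne hbdd
  have hB₀fin : B₀.Finite := hC.subset hsub
  refine ⟨B₀, ⟨hsub, hind, ?_⟩, hB₀fin⟩
  intro c hcC
  by_contra hc
  have hcB₀ : c ∉ B₀ := fun h => hc (M.subset_cl _ (Or.inr h))
  have hmem : (insert c B₀).ncard ∈ P :=
    ⟨insert c B₀, insert_subset hcC hsub, M.indep_insert hind hc, rfl⟩
  have := le_csSup hbdd hmem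
  rw [Set.ncard_insert_of_notMem hcB₀ hB₀fin, hcard] at this
  omega

lemma rk_eq_card {D C B₀ : Set X} (hC : C.Finite) (hB : M.IsBasisOver D C B₀) :
    M.rk C D = B₀.ncard := by
  obtain ⟨hsub, hind, hspan⟩ := hB
  have hB₀fin : B₀.Finite := hC.subset hsub
  apply le_antisymm
  · exact Nat.sInf_le ⟨B₀, ⟨hsub, hind, hspan⟩, rfl⟩
  · have hmemb : B₀.ncard ∈ {n : ℕ | ∃ B₁ : Set X, M.IsBasisOver D C B₁ ∧ B₁.ncard = n} :=
      ⟨B₀, ⟨hsub, hind, hspan⟩, rfl⟩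
    apply le_csInf ⟨B₀.ncard, hmemb⟩
    rintro n ⟨B₁, ⟨hsub₁, _, hspan₁⟩, rfl⟩
    exact M.ncard_le_of_indep hB₀fin (hC.subset hsub₁) hind (hsub.trans hspan₁)

lemma rk_le_ncard {D C S : Set X} (hC : C.Finite) (hS : S.Finite)
    (h : C ⊆ M.cl (D ∪ S)) : M.rk C D ≤ S.ncard := by
  obtain ⟨B₀, hB, hB₀fin⟩ := M.exists_basis D hC
  rw [M.rk_eq_card hC hB]
  exact M.ncard_le_of_indep hB₀fin hS hB.2.1 (hB.1.trans h)

lemma rk_eq_zero {D C : Set X} (hC : C.Finite) (h : C ⊆ M.cl D) : M.rk C D = 0 := by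
  have hB : M.IsBasisOver D C ∅ :=
    ⟨empty_subset _, fun b hb => absurd hb (notMem_empty b), by rwa [union_empty]⟩
  rw [M.rk_eq_card hC hB, Set.ncard_empty]

lemma rk_union {D C C' : Set X} (hC : C.Finite) (hC' : C'.Finite) :
    M.rk (C ∪ C') D = M.rk C (D ∪ C') + M.rk C' D := by
  obtain ⟨B', hB', hB'fin⟩ := M.exists_basis D hC'
  obtain ⟨B, hB, hBfin⟩ := M.exists_basis (D ∪ C') hC
  obtain ⟨hB'sub, hB'ind, hB'span⟩ := hB'
  obtain ⟨hBsub, hBind, hBspan⟩ := hB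
  have hdisj : Disjoint B B' := by
    rw [Set.disjoint_left]
    intro b hbB hbB'
    apply hBind b hbB
    exact M.subset_cl _ (Or.inl (Or.inr (hB'sub hbB')))
  have hunion : M.IsBasisOver D (C ∪ C') (B ∪ B') := by
    refine ⟨union_subset_union hBsub hB'sub, ?_, ?_⟩
    · intro b hb
      rcases hb with hbB | hbB'
      · intro hmem
        apply hBind b hbB
        refine M.cl_mono ?_ hmem
        rintro x (hx | ⟨hx, hxb⟩)
        · exact Or.inl (Or.inl hx)
        · rcases hx with hxB | hxB'
          · exact Or.inr ⟨hxB, hxb⟩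
          · exact Or.inl (Or.inr (hB'sub hxB'))
      · intro hmem
        have hbB : b ∉ B := fun h => Set.disjoint_left.mp hdisj h hbB'
        -- hmem : b ∈ cl (D ∪ ((B ∪ B') \ {b}))
        have hmem' : b ∈ M.cl ((D ∪ (B' \ {b})) ∪ B) := by
          refine M.cl_mono ?_ hmem
          rintro x (hx | ⟨hx, hxb⟩)
          · exact Or.inl (Or.inl hx)
          · rcases hx with hxB | hxB'
            · exact Or.inr hxB
            · exact Or.inl (Or.inr ⟨hxB', hxb⟩)
        have hb2 : b ∉ M.cl (D ∪ (B' \ {b})) := hB'ind b hbB'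
        obtain ⟨c, hcB, hckey⟩ := M.exchange_erase hBfin hmem' hb2
        apply hBind c hcB
        refine M.cl_mono ?_ hckey
        rintro x (((hx | ⟨hx, _⟩) | hx) | rfl)
        · exact Or.inl (Or.inl hx)
        · exact Or.inl (Or.inr (hB'sub hx))
        · exact Or.inr hx
        · exact Or.inl (Or.inr (hB'sub hbB'))
    · have h1 : C' ⊆ M.cl (D ∪ (B ∪ B')) := by
        refine hB'span.trans (M.cl_mono ?_)
        exact union_subset_union_right _ subset_union_right
      have h2 : C ⊆ M.cl (D ∪ (B ∪ B')) := by
        refine hBspan.trans (M.cl_le ?_)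
        rintro x ((hx | hx) | hx)
        · exact M.subset_cl _ (Or.inl hx)
        · exact h1 hx
        · exact M.subset_cl _ (Or.inr (Or.inl hx))
      exact union_subset h2 h1
  rw [M.rk_eq_card (hC.union hC') hunion, M.rk_eq_card hC ⟨hBsub, hBind, hBspan⟩,
    M.rk_eq_card hC' ⟨hB'sub, hB'ind, hB'span⟩,
    Set.ncard_union_eq hdisj hBfin hB'fin]

end FinMatroid
section Lex

variable {k : ℕ} {d : Fin k → ℕ}

lemma lexLtOp_irrefl (r : ∀ i : Fin k, Fin (d i) → ℕ) : ¬ lexLtOp r r := by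
  rintro ⟨i, j, hlt, -, -⟩; exact lt_irrefl _ hlt

lemma lexLtOp_trans {r u v : ∀ i : Fin k, Fin (d i) → ℕ}
    (h1 : lexLtOp r u) (h2 : lexLtOp u v) : lexLtOp r v := by
  obtain ⟨i₁, j₁, hlt₁, hj₁, hi₁⟩ := h1
  obtain ⟨i₂, j₂, hlt₂, hj₂, hi₂⟩ := h2
  rcases lt_trichotomy i₁ i₂ with hi | rfl | hi
  · refine ⟨i₂, j₂, ?_, ?_, ?_⟩
    · rw [hi₁ i₂ hi j₂]; exact hlt₂
    · intro j' hj'; rw [hi₁ i₂ hi j', hj₂ j' hj']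
    · intro i' hi' j'; rw [hi₁ i' (hi.trans hi') j', hi₂ i' hi' j']
  · rcases lt_trichotomy j₁ j₂ with hj | rfl | hj
    · refine ⟨i₁, j₂, ?_, ?_, ?_⟩
      · rw [hj₁ j₂ hj]; exact hlt₂
      · intro j' hj'; rw [hj₁ j' (hj.trans hj'), hj₂ j' hj']
      · intro i' hi' j'; rw [hi₁ i' hi' j', hi₂ i' hi' j']
    · refine ⟨i₁, j₁, hlt₁.trans hlt₂, ?_, ?_⟩
      · intro j' hj'; rw [hj₁ j' hj', hj₂ j' hj']
      · intro i' hi' j'; rw [hi₁ i' hi' j', hi₂ i' hi' j']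
    · refine ⟨i₁, j₁, ?_, ?_, ?_⟩
      · rw [← hj₂ j₁ hj]; exact hlt₁
      · intro j' hj'; rw [hj₁ j' hj', hj₂ j' (hj.trans hj')]
      · intro i' hi' j'; rw [hi₁ i' hi' j', hi₂ i' hi' j']
  · refine ⟨i₁, j₁, ?_, ?_, ?_⟩
    · rw [← hi₂ i₁ hi j₁]; exact hlt₁
    · intro j' hj'; rw [hj₁ j' hj', hi₂ i₁ hi j']
    · intro i' hi' j'; rw [hi₁ i' hi' j', hi₂ i' (hi.trans hi') j']

lemma lexLtOp_trichotomy {r u : ∀ i : Fin k, Fin (d i) → ℕ} (h : r ≠ u) :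
    lexLtOp r u ∨ lexLtOp u r := by
  classical
  have hI : (Finset.univ.filter (fun i => r i ≠ u i)).Nonempty := by
    by_contra hc
    rw [Finset.not_nonempty_iff_eq_empty, Finset.filter_eq_empty_iff] at hc
    exact h (funext fun i => not_ne_iff.mp (hc (Finset.mem_univ i)))
  set i₀ := (Finset.univ.filter (fun i => r i ≠ u i)).max' hI with hi₀def
  have hi₀mem : r i₀ ≠ u i₀ := by
    have := (Finset.univ.filter (fun i => r i ≠ u i)).max'_mem hI
    rw [Finset.mem_filter] at this; exact this.2
  have hi₀max : ∀ i : Fin k, i₀ < i → r i = u i := by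
    intro i hi
    by_contra hne
    exact absurd (Finset.le_max' _ i (Finset.mem_filter.mpr ⟨Finset.mem_univ i, hne⟩))
      (not_le.mpr hi)
  have hJ : (Finset.univ.filter (fun j => r i₀ j ≠ u i₀ j)).Nonempty := by
    by_contra hc
    rw [Finset.not_nonempty_iff_eq_empty, Finset.filter_eq_empty_iff] at hc
    exact hi₀mem (funext fun j => not_ne_iff.mp (hc (Finset.mem_univ j)))
  set j₀ := (Finset.univ.filter (fun j => r i₀ j ≠ u i₀ j)).max' hJ with hj₀def
  have hj₀mem : r i₀ j₀ ≠ u i₀ j₀ := by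
    have := (Finset.univ.filter (fun j => r i₀ j ≠ u i₀ j)).max'_mem hJ
    rw [Finset.mem_filter] at this; exact this.2
  have hj₀max : ∀ j, j₀ < j → r i₀ j = u i₀ j := by
    intro j hj
    by_contra hne
    exact absurd (Finset.le_max' _ j (Finset.mem_filter.mpr ⟨Finset.mem_univ j, hne⟩))
      (not_le.mpr hj)
  rcases lt_or_gt_of_ne hj₀mem with hlt | hlt
  · exact Or.inl ⟨i₀, j₀, hlt, hj₀max, fun i hi j => congrFun (hi₀max i hi) j⟩
  · exact Or.inr ⟨i₀, j₀, hlt, fun j hj => (hj₀max j hj).symm,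
      fun i hi j => (congrFun (hi₀max i hi) j).symm⟩

end Lex

/-- Increment the exponent at position `(i, j)` by one. -/
def updE {k : ℕ} {d : Fin k → ℕ} (u : ∀ i : Fin k, Fin (d i) → ℕ) (i : Fin k)
    (j : Fin (d i)) : ∀ i' : Fin k, Fin (d i') → ℕ :=
  Function.update u i (Function.update (u i) j (u i j + 1))

section updE

variable {k : ℕ} {d : Fin k → ℕ} (u : ∀ i : Fin k, Fin (d i) → ℕ) (i : Fin k) (j : Fin (d i))

lemma updE_apply_ne {i' : Fin k} (h : i' ≠ i) : updE u i j i' = u i' :=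
  Function.update_of_ne h _ u

lemma updE_apply_self : updE u i j i = Function.update (u i) j (u i j + 1) :=
  Function.update_self i _ u

lemma updE_self_self : updE u i j i j = u i j + 1 := by
  rw [updE_apply_self, Function.update_self]

lemma updE_self_ne {j' : Fin (d i)} (h : j' ≠ j) : updE u i j i j' = u i j' := by
  rw [updE_apply_self, Function.update_of_ne h]

lemma sum_updE_self : (∑ j', updE u i j i j') = (∑ j', u i j') + 1 := by
  classical
  rw [updE_apply_self, Finset.sum_update_of_mem (Finset.mem_univ j),
    Finset.sdiff_singleton_eq_erase, ← Finset.add_sum_erase _ _ (Finset.mem_univ j)]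
  omega

end updE
section LexStep

variable {k : ℕ} {d : Fin k → ℕ}

lemma lexLtOp_updE_self (u : ∀ i : Fin k, Fin (d i) → ℕ) {i : Fin k}
    {j j' : Fin (d i)} (hjj : j' < j) : lexLtOp (updE u i j') (updE u i j) := by
  refine ⟨i, j, ?_, ?_, ?_⟩
  · rw [updE_self_ne _ _ _ (ne_of_gt hjj), updE_self_self]; omega
  · intro j'' hj''
    rw [updE_self_ne _ _ _ (ne_of_gt (hjj.trans hj'')), updE_self_ne _ _ _ (ne_of_gt hj'')]
  · intro i'' hi'' j''
    rw [updE_apply_ne _ _ _ (ne_of_gt hi''), updE_apply_ne _ _ _ (ne_of_gt hi'')]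

lemma lexLtOp_updE {r u : ∀ i : Fin k, Fin (d i) → ℕ} (h : lexLtOp r u) {i : Fin k}
    {j j' : Fin (d i)} (hj : j' ≤ j) : lexLtOp (updE r i j') (updE u i j) := by
  obtain ⟨p, q, hlt, hq, hp⟩ := h
  rcases eq_or_lt_of_le hj with rfl | hjj
  · -- j' = j : same witness (p, q)
    refine ⟨p, q, ?_, ?_, ?_⟩
    · by_cases hpi : p = i
      · subst hpi
        by_cases hqj : q = j'
        · subst hqj; rw [updE_self_self, updE_self_self]; omega
        · rw [updE_self_ne _ _ _ hqj, updE_self_ne _ _ _ hqj]; exact hlt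
      · rw [updE_apply_ne _ _ _ hpi, updE_apply_ne _ _ _ hpi]; exact hlt
    · intro j'' hj''
      by_cases hpi : p = i
      · subst hpi
        by_cases hqj : j'' = j'
        · subst hqj; rw [updE_self_self, updE_self_self, hq _ hj'']
        · rw [updE_self_ne _ _ _ hqj, updE_self_ne _ _ _ hqj, hq _ hj'']
      · rw [updE_apply_ne _ _ _ hpi, updE_apply_ne _ _ _ hpi, hq _ hj'']
    · intro i'' hi'' j''
      by_cases hii : i'' = i
      · subst hii
        have hbase : r i'' = u i'' := funext (hp i'' hi'')
        by_cases hqj : j'' = j'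
        · subst hqj; rw [updE_self_self, updE_self_self, hbase]
        · rw [updE_self_ne _ _ _ hqj, updE_self_ne _ _ _ hqj, hbase]
      · rw [updE_apply_ne _ _ _ hii, updE_apply_ne _ _ _ hii, hp i'' hi'' j'']
  · -- j' < j
    rcases lt_trichotomy i p with hip | rfl | hpi
    · -- i < p : witness (p, q)
      have hpne : p ≠ i := ne_of_gt hip
      refine ⟨p, q, ?_, ?_, ?_⟩
      · rw [updE_apply_ne _ _ _ hpne, updE_apply_ne _ _ _ hpne]; exact hlt
      · intro j'' hj''; rw [updE_apply_ne _ _ _ hpne, updE_apply_ne _ _ _ hpne, hq _ hj'']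
      · intro i'' hi'' j''
        have : i'' ≠ i := ne_of_gt (hip.trans hi'')
        rw [updE_apply_ne _ _ _ this, updE_apply_ne _ _ _ this, hp i'' hi'' j'']
    · -- p = i (after rcases with rfl, p ≡ i)
      rcases lt_trichotomy j q with hjq | rfl | hqj
      · -- j < q : witness (p, q)
        refine ⟨i, q, ?_, ?_, ?_⟩
        · rw [updE_self_ne _ _ _ (ne_of_gt (hjj.trans hjq)), updE_self_ne _ _ _ (ne_of_gt hjq)]
          exact hlt
        · intro j'' hj''
          rw [updE_self_ne _ _ _ (ne_of_gt (hjj.trans (hjq.trans hj''))),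
            updE_self_ne _ _ _ (ne_of_gt (hjq.trans hj'')), hq _ hj'']
        · intro i'' hi'' j''
          rw [updE_apply_ne _ _ _ (ne_of_gt hi''), updE_apply_ne _ _ _ (ne_of_gt hi''),
            hp i'' hi'' j'']
      · -- q = j : witness (p, j)
        refine ⟨i, j, ?_, ?_, ?_⟩
        · rw [updE_self_ne _ _ _ (ne_of_gt hjj), updE_self_self]; omega
        · intro j'' hj''
          rw [updE_self_ne _ _ _ (ne_of_gt (hjj.trans hj'')), updE_self_ne _ _ _ (ne_of_gt hj''),
            hq _ hj'']
        · intro i'' hi'' j''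
          rw [updE_apply_ne _ _ _ (ne_of_gt hi''), updE_apply_ne _ _ _ (ne_of_gt hi''),
            hp i'' hi'' j'']
      · -- q < j : witness (p, j)
        refine ⟨i, j, ?_, ?_, ?_⟩
        · rw [updE_self_ne _ _ _ (ne_of_gt hjj), updE_self_self, hq _ hqj]; omega
        · intro j'' hj''
          rw [updE_self_ne _ _ _ (ne_of_gt (hjj.trans hj'')), updE_self_ne _ _ _ (ne_of_gt hj''),
            hq _ (hqj.trans hj'')]
        · intro i'' hi'' j''
          rw [updE_apply_ne _ _ _ (ne_of_gt hi''), updE_apply_ne _ _ _ (ne_of_gt hi''),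
            hp i'' hi'' j'']
    · -- p < i : witness (i, j)
      have hine : (i : Fin k) ≠ p := ne_of_gt hpi
      refine ⟨i, j, ?_, ?_, ?_⟩
      · rw [updE_self_ne _ _ _ (ne_of_gt hjj), updE_self_self, hp i hpi j]; omega
      · intro j'' hj''
        rw [updE_self_ne _ _ _ (ne_of_gt (hjj.trans hj'')), updE_self_ne _ _ _ (ne_of_gt hj''),
          hp i hpi j'']
      · intro i'' hi'' j''
        have : i'' ≠ i := ne_of_gt hi''
        rw [updE_apply_ne _ _ _ this, updE_apply_ne _ _ _ this, hp i'' (hpi.trans hi'') j'']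

end LexStep
section OpPow

variable {X : Type*}

private lemma foldr_comp_congr {ι : Type*} (F G : ι → X → X) (l : List ι)
    (h : ∀ a ∈ l, F a = G a) :
    l.foldr (fun a g => F a ∘ g) id = l.foldr (fun a g => G a ∘ g) id := by
  induction l with
  | nil => rfl
  | cons a t ih =>
    simp only [List.foldr_cons]
    rw [h a (List.mem_cons_self), ih (fun b hb => h b (List.mem_cons_of_mem a hb))]

private lemma commute_foldr {ι : Type*} (G : ι → X → X) (f : X → X) (l : List ι)
    (h : ∀ a ∈ l, Function.Commute f (G a)) :
    Function.Commute f (l.foldr (fun a g => G a ∘ g) id) := by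
  induction l with
  | nil => exact fun x => rfl
  | cons a t ih =>
    simp only [List.foldr_cons]
    exact (h a (List.mem_cons_self)).comp_right
      (ih (fun b hb => h b (List.mem_cons_of_mem a hb)))

private lemma foldr_comp_pull {ι : Type*} (F G : ι → X → X) (f : X → X) (l : List ι)
    (a₀ : ι) (ha : a₀ ∈ l) (hnd : l.Nodup)
    (heq : F a₀ = f ∘ G a₀) (hoff : ∀ a ∈ l, a ≠ a₀ → F a = G a)
    (hcom : ∀ a ∈ l, Function.Commute f (G a)) :
    l.foldr (fun a g => F a ∘ g) id = f ∘ l.foldr (fun a g => G a ∘ g) id := by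
  induction l with
  | nil => exact absurd ha (List.not_mem_nil)
  | cons a t ih =>
    rcases List.nodup_cons.mp hnd with ⟨hat, hndt⟩
    simp only [List.foldr_cons]
    rcases List.mem_cons.mp ha with rfl | hmem
    · rw [heq]
      have htail : t.foldr (fun a g => F a ∘ g) id = t.foldr (fun a g => G a ∘ g) id :=
        foldr_comp_congr F G t (fun b hb => hoff b (List.mem_cons_of_mem _ hb)
          (fun hba => hat (hba ▸ hb)))
      rw [htail, Function.comp_assoc]
    · have hane : a ≠ a₀ := fun hc => hat (hc ▸ hmem)
      rw [hoff a (List.mem_cons_self) hane,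
        ih hmem hndt (fun b hb => hoff b (List.mem_cons_of_mem _ hb))
          (fun b hb => hcom b (List.mem_cons_of_mem _ hb))]
      have hc : Function.Commute f (G a) := hcom a (List.mem_cons_self)
      calc G a ∘ (f ∘ t.foldr (fun a g => G a ∘ g) id)
          = (G a ∘ f) ∘ t.foldr (fun a g => G a ∘ g) id := by rw [Function.comp_assoc]
        _ = (f ∘ G a) ∘ t.foldr (fun a g => G a ∘ g) id := by rw [hc.comp_eq]
        _ = f ∘ (G a ∘ t.foldr (fun a g => G a ∘ g) id) := by rw [Function.comp_assoc]

variable {k : ℕ} {d : Fin k → ℕ} {φ : ∀ i : Fin k, Fin (d i) → X → X}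

lemma opPow_updE (hcomm : Commuting φ) (u : ∀ i : Fin k, Fin (d i) → ℕ)
    (i : Fin k) (j : Fin (d i)) :
    opPow φ (updE u i j) = φ i j ∘ opPow φ u := by
  unfold opPow
  refine foldr_comp_pull _ _ (φ i j) _ i (List.mem_finRange i) (List.nodup_finRange k)
    ?_ ?_ ?_
  · -- inner pull at row i
    rw [updE_apply_self]
    refine foldr_comp_pull _ _ (φ i j) _ j (List.mem_finRange j) (List.nodup_finRange (d i))
      ?_ ?_ ?_
    · rw [Function.update_self, Function.iterate_succ']
    · intro a _ hane; rw [Function.update_of_ne hane]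
    · intro a _; exact ((hcomm i j i a).iterate_right _)
  · intro a _ hane
    rw [updE_apply_ne _ _ _ hane]
  · intro a _
    exact commute_foldr _ _ _ (fun b _ => (hcomm i j a b).iterate_right _)

lemma opPow_updE_apply (hcomm : Commuting φ) (u : ∀ i : Fin k, Fin (d i) → ℕ)
    (i : Fin k) (j : Fin (d i)) (x : X) :
    opPow φ (updE u i j) x = φ i j (opPow φ u x) := by
  rw [opPow_updE hcomm]; rfl

end OpPow
section Step

variable {X : Type*} {k : ℕ} {d : Fin k → ℕ}

lemma sum_updE_eq {r u : ∀ i : Fin k, Fin (d i) → ℕ}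
    (hsum : ∀ i'', (∑ j'', r i'' j'') = ∑ j'', u i'' j'') (i : Fin k)
    (j : Fin (d i)) (j' : Fin (d i)) (i'' : Fin k) :
    (∑ j'', updE r i j' i'' j'') = ∑ j'', updE u i j i'' j'' := by
  by_cases h : i'' = i
  · subst h; rw [sum_updE_self, sum_updE_self, hsum]
  · rw [updE_apply_ne _ _ _ h, updE_apply_ne _ _ _ h]; exact hsum i''

lemma fDim_step (M : FinMatroid X) (φ : ∀ i : Fin k, Fin (d i) → X → X)
    (hcomm : Commuting φ) (htri : ∀ i, Triangular M (φ i))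
    {A : Set X} (B : Set X) (hA : A.Finite) (u : ∀ i : Fin k, Fin (d i) → ℕ)
    (i : Fin k) (j : Fin (d i)) :
    fDim M φ A B (updE u i j) ≤ fDim M φ A B u := by
  classical
  set D : Set X := ThetaU φ u A ∪ PhiEq φ (fun i'' => ∑ j'', u i'' j'') B with hD
  obtain ⟨C₀, hC₀basis, hC₀fin⟩ := M.exists_basis D (hA.image (opPow φ u))
  have hrk : fDim M φ A B u = C₀.ncard := M.rk_eq_card (hA.image (opPow φ u)) hC₀basis
  rw [hrk]
  unfold fDim
  refine le_trans ?_ (Set.ncard_image_le (f := φ i j) hC₀fin)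
  apply M.rk_le_ncard (hA.image _) (hC₀fin.image _)
  rintro x ⟨a, ha, rfl⟩
  have h1 : opPow φ u a ∈ M.cl (D ∪ C₀) := hC₀basis.2.2 ⟨a, ha, rfl⟩
  have h2 := htri i j (opPow φ u a) _ h1
  rw [opPow_updE_apply hcomm]
  have hsub : (⋃ j'' ∈ Finset.Iic j, φ i j'' '' (D ∪ C₀)) ⊆
      M.cl ((ThetaU φ (updE u i j) A ∪
        PhiEq φ (fun i'' => ∑ j'', updE u i j i'' j'') B) ∪ φ i j '' C₀) := by
    rintro y hy
    simp only [Set.mem_iUnion] at hy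
    obtain ⟨j'', hj''mem, z, hz, rfl⟩ := hy
    have hj'' : j'' ≤ j := Finset.mem_Iic.mp hj''mem
    apply M.subset_cl
    rcases hz with (hz | hz) | hz
    · -- z ∈ ThetaU φ u A
      obtain ⟨r, hrsum, hrlex, a', ha', rfl⟩ := hz
      refine Or.inl (Or.inl ⟨updE r i j'', sum_updE_eq hrsum i j j'', lexLtOp_updE hrlex hj'',
        a', ha', ?_⟩)
      rw [opPow_updE_apply hcomm]
    · -- z ∈ PhiEq φ s B
      obtain ⟨r, hrsum, b, hb, rfl⟩ := hz
      refine Or.inl (Or.inr ⟨updE r i j'', fun i'' => sum_updE_eq (fun i₀ => hrsum i₀) i j j'' i'',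
        b, hb, ?_⟩)
      rw [opPow_updE_apply hcomm]
    · -- z ∈ C₀
      by_cases hje : j'' = j
      · subst hje
        exact Or.inr ⟨z, hz, rfl⟩
      · have hjlt : j'' < j := lt_of_le_of_ne hj'' hje
        obtain ⟨a', ha', rfl⟩ := hC₀basis.1 hz
        refine Or.inl (Or.inl ⟨updE u i j'', sum_updE_eq (fun _ => rfl) i j j'',
          lexLtOp_updE_self u hjlt, a', ha', ?_⟩)
        rw [opPow_updE_apply hcomm]
  exact M.cl_le hsub h2

end Step
section Mono

variable {X : Type*} {k : ℕ} {d : Fin k → ℕ}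

lemma fDim_mono (M : FinMatroid X) (φ : ∀ i : Fin k, Fin (d i) → X → X)
    (hcomm : Commuting φ) (htri : ∀ i, Triangular M (φ i))
    {A : Set X} (B : Set X) (hA : A.Finite) :
    ∀ (n : ℕ) (u u' : ∀ i : Fin k, Fin (d i) → ℕ), (∀ i j, u i j ≤ u' i j) →
      (∑ i, ∑ j, (u' i j - u i j)) = n → fDim M φ A B u' ≤ fDim M φ A B u := by
  classical
  intro n
  induction n with
  | zero =>
    intro u u' hle hsum
    have heq : u = u' := by
      funext i j
      have h1 : ∀ i ∈ Finset.univ, (∑ j, (u' i j - u i j)) = 0 :=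
        (Finset.sum_eq_zero_iff).mp hsum
      have h2 := (Finset.sum_eq_zero_iff).mp (h1 i (Finset.mem_univ i)) j (Finset.mem_univ j)
      have := hle i j
      omega
    rw [heq]
  | succ n ih =>
    intro u u' hle hsum
    have hex : ∃ i j, u i j < u' i j := by
      by_contra hc
      push_neg at hc
      have : ∀ i ∈ Finset.univ, (∑ j, (u' i j - u i j)) = 0 := by
        intro i _
        apply Finset.sum_eq_zero
        intro j _
        have h1 := hc i j
        have h2 := hle i j
        omega
      rw [Finset.sum_eq_zero this] at hsum
      omega
    obtain ⟨i, j, hij⟩ := hex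
    set u'' : ∀ i' : Fin k, Fin (d i') → ℕ :=
      Function.update u' i (Function.update (u' i) j (u' i j - 1)) with hu''def
    have hrow : u'' i = Function.update (u' i) j (u' i j - 1) := Function.update_self _ _ _
    have hrow' : ∀ i' : Fin k, i' ≠ i → u'' i' = u' i' := fun i' h =>
      Function.update_of_ne h _ _
    have hval : u'' i j = u' i j - 1 := by rw [hrow, Function.update_self]
    have hval' : ∀ j' : Fin (d i), j' ≠ j → u'' i j' = u' i j' := by
      intro j' h; rw [hrow, Function.update_of_ne h]
    have hupd : updE u'' i j = u' := by
      funext i' j'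
      by_cases hi' : i' = i
      · subst hi'
        by_cases hj' : j' = j
        · subst hj'; rw [updE_self_self, hval]; omega
        · rw [updE_self_ne _ _ _ hj', hval' j' hj']
      · rw [updE_apply_ne _ _ _ hi', hrow' i' hi']
    have h1 : fDim M φ A B u' ≤ fDim M φ A B u'' := by
      rw [← hupd]; exact fDim_step M φ hcomm htri B hA u'' i j
    have h2 : ∀ i' j', u i' j' ≤ u'' i' j' := by
      intro i' j'
      by_cases hi' : i' = i
      · subst hi'
        by_cases hj' : j' = j
        · subst hj'; rw [hval]; omega
        · rw [hval' j' hj']; exact hle i' j'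
      · rw [hrow' i' hi']; exact hle i' j'
    have h3 : (∑ i', ∑ j', (u'' i' j' - u i' j')) = n := by
      have hrowsum : ∀ i' ∈ Finset.univ.erase i,
          (∑ j', (u'' i' j' - u i' j')) = ∑ j', (u' i' j' - u i' j') := by
        intro i' hi'
        rw [hrow' i' (Finset.ne_of_mem_erase hi')]
      have hisum : (∑ j', (u' i j' - u i j')) = (∑ j', (u'' i j' - u i j')) + 1 := by
        rw [← Finset.add_sum_erase _ (fun j' => u' i j' - u i j') (Finset.mem_univ j),
          ← Finset.add_sum_erase _ (fun j' => u'' i j' - u i j') (Finset.mem_univ j)]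
        have he : ∀ j' ∈ Finset.univ.erase j, u'' i j' - u i j' = u' i j' - u i j' := by
          intro j' hj'
          rw [hval' j' (Finset.ne_of_mem_erase hj')]
        rw [Finset.sum_congr rfl he, hval]
        have := hle i j
        omega
      rw [← Finset.add_sum_erase _ (fun i' => ∑ j', (u' i' j' - u i' j')) (Finset.mem_univ i)]
        at hsum
      rw [← Finset.add_sum_erase _ (fun i' => ∑ j', (u'' i' j' - u i' j')) (Finset.mem_univ i),
        Finset.sum_congr rfl hrowsum]
      omega
    exact h1.trans (ih u u'' h2 h3)

end Mono
section Part2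

variable {X : Type*} {k : ℕ} {d : Fin k → ℕ}

lemma finite_U (s : Fin k → ℕ) :
    {u : ∀ i : Fin k, Fin (d i) → ℕ | ∀ i, (∑ j, u i j) = s i}.Finite := by
  classical
  set U := {u : ∀ i : Fin k, Fin (d i) → ℕ | ∀ i, (∑ j, u i j) = s i} with hU
  have hbound : ∀ u ∈ U, ∀ (i : Fin k) (j : Fin (d i)), u i j < s i + 1 := by
    intro u hu i j
    have h1 : u i j ≤ ∑ j', u i j' :=
      Finset.single_le_sum (fun _ _ => Nat.zero_le _) (Finset.mem_univ j)
    have h2 := hu i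
    omega
  have : Finite ↥U := by
    let F : ↥U → ∀ i : Fin k, Fin (d i) → Fin (s i + 1) :=
      fun u i j => ⟨u.1 i j, hbound u.1 u.2 i j⟩
    have hinj : Function.Injective F := by
      intro u v huv
      ext i j
      have := congrFun (congrFun huv i) j
      simpa [F] using congrArg Fin.val this
    exact Finite.of_injective F hinj
  exact Set.finite_coe_iff.mp this

lemma exists_lex_max (V : Finset (∀ i : Fin k, Fin (d i) → ℕ)) (h : V.Nonempty) :
    ∃ m ∈ V, ∀ v ∈ V, ¬ lexLtOp m v := by
  classical
  revert h
  induction V using Finset.induction_on with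
  | empty => exact fun h => absurd h (by simp)
  | @insert a W haW ihW =>
    intro _
    rcases W.eq_empty_or_nonempty with rfl | hW
    · refine ⟨a, Finset.mem_insert_self _ _, ?_⟩
      intro v hv
      rcases Finset.mem_insert.mp hv with rfl | hv
      · exact lexLtOp_irrefl _
      · exact absurd hv (Finset.notMem_empty v)
    · obtain ⟨m, hmW, hm⟩ := ihW hW
      by_cases hma : lexLtOp m a
      · refine ⟨a, Finset.mem_insert_self _ _, ?_⟩
        intro v hv
        rcases Finset.mem_insert.mp hv with rfl | hv
        · exact lexLtOp_irrefl _
        · exact fun hav => hm v hv (lexLtOp_trans hma hav)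
      · refine ⟨m, Finset.mem_insert_of_mem hmW, ?_⟩
        intro v hv
        rcases Finset.mem_insert.mp hv with rfl | hv
        · exact hma
        · exact hm v hv

lemma part2_aux (M : FinMatroid X) (φ : ∀ i : Fin k, Fin (d i) → X → X)
    (A B : Set X) (hA : A.Finite) (s : Fin k → ℕ) :
    ∀ V : Finset (∀ i : Fin k, Fin (d i) → ℕ),
    (∀ u ∈ V, ∀ i, (∑ j, u i j) = s i) →
    (∀ u ∈ V, ∀ r : ∀ i : Fin k, Fin (d i) → ℕ,
      (∀ i, (∑ j, r i j) = s i) → lexLtOp r u → r ∈ V) →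
    (∑ u ∈ V, fDim M φ A B u) = M.rk (⋃ u ∈ V, opPow φ u '' A) (PhiEq φ s B) := by
  classical
  intro V
  induction V using Finset.strongInduction with
  | _ V ih =>
    intro hVU hdc
    rcases V.eq_empty_or_nonempty with rfl | hVne
    · simp only [Finset.sum_empty, Finset.notMem_empty, Set.iUnion_of_empty,
        Set.iUnion_false, Set.iUnion_empty]
      rw [M.rk_eq_zero Set.finite_empty (Set.empty_subset _)]
    · obtain ⟨u0, hu0V, hu0max⟩ := exists_lex_max V hVne
      set V' := V.erase u0 with hV'def
      have hV'ss : V' ⊂ V := Finset.erase_ssubset hu0V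
      have hVU' : ∀ u ∈ V', ∀ i, (∑ j, u i j) = s i :=
        fun u hu => hVU u (Finset.mem_of_mem_erase hu)
      have hdc' : ∀ u ∈ V', ∀ r : ∀ i : Fin k, Fin (d i) → ℕ,
          (∀ i, (∑ j, r i j) = s i) → lexLtOp r u → r ∈ V' := by
        intro u hu r hrs hrlex
        have hrV : r ∈ V := hdc u (Finset.mem_of_mem_erase hu) r hrs hrlex
        refine Finset.mem_erase.mpr ⟨?_, hrV⟩
        rintro rfl
        exact hu0max u (Finset.mem_of_mem_erase hu) hrlex
      have hC'fin : (⋃ u ∈ V', opPow φ u '' A).Finite :=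
        Set.Finite.biUnion V'.finite_toSet (fun u _ => hA.image _)
      have hTheta : ThetaU φ u0 A = ⋃ u ∈ V', opPow φ u '' A := by
        ext x
        constructor
        · rintro ⟨r, hrsum, hrlex, a, ha, rfl⟩
          have hrs : ∀ i, (∑ j, r i j) = s i := fun i => (hrsum i).trans (hVU u0 hu0V i)
          have hrV : r ∈ V := hdc u0 hu0V r hrs hrlex
          have hrne : r ≠ u0 := fun h => lexLtOp_irrefl u0 (h ▸ hrlex)
          exact Set.mem_biUnion (Finset.mem_erase.mpr ⟨hrne, hrV⟩) ⟨a, ha, rfl⟩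
        · intro hx
          rw [Set.mem_iUnion] at hx
          obtain ⟨u, hu⟩ := hx
          rw [Set.mem_iUnion] at hu
          obtain ⟨huV', a, ha, rfl⟩ := hu
          have hune : u ≠ u0 := Finset.ne_of_mem_erase huV'
          have huV : u ∈ V := Finset.mem_of_mem_erase huV'
          have hulex : lexLtOp u u0 :=
            (lexLtOp_trichotomy hune).resolve_right (hu0max u huV)
          exact ⟨u, fun i => (hVU u huV i).trans (hVU u0 hu0V i).symm, hulex, a, ha, rfl⟩
      have hsplit : (⋃ u ∈ V, opPow φ u '' A) =
          (opPow φ u0 '' A) ∪ ⋃ u ∈ V', opPow φ u '' A := by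
        conv_lhs => rw [← Finset.insert_erase hu0V]
        rw [Finset.set_biUnion_insert]
      have hfd : fDim M φ A B u0 =
          M.rk (opPow φ u0 '' A) (PhiEq φ s B ∪ ⋃ u ∈ V', opPow φ u '' A) := by
        unfold fDim
        have hsu : (fun i => ∑ j, u0 i j) = s := funext (hVU u0 hu0V)
        rw [hsu, hTheta, Set.union_comm]
      rw [hsplit, M.rk_union (hA.image _) hC'fin, ← Finset.add_sum_erase _ _ hu0V,
        ih V' hV'ss hVU' hdc', hfd]

end Part2
/-- **Lemma 2.2.** If each `Φᵢ` is triangular and `A` is finite, then `f^Φ_{A|B}` is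
decreasing for the product order on `ℕ^m`, and
`Σ_{‖ū‖ = s̄} f^Φ_{A|B}(ū) = rk(Φ^{(s̄)}(A) | Φ^{(s̄)}(B))` for every `s̄ ∈ ℕ^k`. -/
theorem statement8 {X : Type*} (M : FinMatroid X) {k : ℕ} (hk : 0 < k) {d : Fin k → ℕ}
    (hd : ∀ i, 0 < d i) (φ : ∀ i : Fin k, Fin (d i) → X → X) (hcomm : Commuting φ)
    (htri : ∀ i, Triangular M (φ i)) (A B : Set X) (hA : A.Finite) :
    (∀ u u' : ∀ i : Fin k, Fin (d i) → ℕ, (∀ i j, u i j ≤ u' i j) →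
      fDim M φ A B u' ≤ fDim M φ A B u) ∧
    (∀ s : Fin k → ℕ,
      (∑ᶠ u ∈ {u : ∀ i : Fin k, Fin (d i) → ℕ | ∀ i, ∑ j, u i j = s i}, fDim M φ A B u)
        = M.rk (PhiEq φ s A) (PhiEq φ s B)) := by
  constructor
  · intro u u' hle
    exact fDim_mono M φ hcomm htri B hA _ u u' hle rfl
  · intro s
    have hU := finite_U (d := d) s
    have hcoe : {u : ∀ i : Fin k, Fin (d i) → ℕ | ∀ i, (∑ j, u i j) = s i} =
        ↑hU.toFinset := (hU.coe_toFinset).symm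
    rw [hcoe, finsum_mem_coe_finset]
    rw [part2_aux M φ A B hA s hU.toFinset (fun u hu => hU.mem_toFinset.mp hu)
      (fun u _ r hrs _ => hU.mem_toFinset.mpr hrs)]
    congr 1
    ext x
    simp only [Set.mem_iUnion, Set.Finite.mem_toFinset, Set.mem_setOf_eq, Set.mem_image]
    constructor
    · rintro ⟨u, hu, a, ha, rfl⟩
      exact ⟨u, hu, a, ha, rfl⟩
    · rintro ⟨u, hu, a, ha, rfl⟩
      exact ⟨u, hu, a, ha, rfl⟩
end
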